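/- arXiv:2010.08132 — 7 statements merged into one kernel-verified Lean document; each statement's English description precedes it below -/
import Mathlib

section
/- Let ξ ~ N(0, I_m) with m ≥ 2, write ξ₁ for its first coordinate and ξ₋₁ for the remaining m−1 coordinates. Then for any γ* > 0, P(|ξ₁|/‖ξ‖ > γ*) ≤ P(‖ξ₋₁‖² ≤ (m−1)/2) + (2/(γ*·√((m−1)π)))·(1 + (γ*)²)^{−(m−1)/2}. -/
open MeasureTheory ProbabilityTheory Real Set Filter
open scoped ENNReal NNReal

section Helpers
variable {dummy : Unit}

lemma sq_tend : Tendsto (fun y : ℝ => -y^2/2) atTop atBot := by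
  apply Tendsto.atBot_div_const (by norm_num)
  apply Filter.tendsto_neg_atBot_iff.mpr
  exact tendsto_pow_atTop (by norm_num)

lemma int_x_exp (t : ℝ) : ∫ x in Set.Ioi t, x * rexp (-x^2/2) = rexp (-t^2/2) := by
  have h : ∀ x ∈ Set.Ioi t, HasDerivAt (fun y => -rexp (-y^2/2)) (x * rexp (-x^2/2)) x := by
    intro x _
    have h1 : HasDerivAt (fun y : ℝ => -y^2/2) (-x) x := by
      have := ((hasDerivAt_pow 2 x).neg.div_const 2)
      exact this.congr_deriv (by push_cast; ring)
    exact (h1.exp).neg.congr_deriv (by ring)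
  have htend : Tendsto (fun y => -rexp (-y^2/2)) atTop (nhds 0) := by
    rw [← neg_zero]
    exact (Real.tendsto_exp_atBot.comp sq_tend).neg
  have hint : IntegrableOn (fun x => x * rexp (-x^2/2)) (Set.Ioi t) := by
    have h2 := integrable_mul_exp_neg_mul_sq (b := 1/2) (by norm_num)
    have h3 : (fun x : ℝ => x * rexp (-(1/2) * x ^ 2)) = fun x => x * rexp (-x^2/2) := by
      funext x; ring_nf
    rw [h3] at h2
    exact h2.integrableOn
  have hcont : ContinuousWithinAt (fun y => -rexp (-y^2/2)) (Set.Ici t) t := by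
    apply Continuous.continuousWithinAt; continuity
  have := MeasureTheory.integral_Ioi_of_hasDerivAt_of_tendsto hcont h hint htend
  rw [this]; simp

lemma pdf_eq (x : ℝ) : gaussianPDFReal 0 1 x = (Real.sqrt (2*π))⁻¹ * rexp (-x^2/2) := by
  simp [gaussianPDFReal]

lemma tail_le {t : ℝ} (ht : 0 < t) :
    ∫ x in Set.Ioi t, gaussianPDFReal 0 1 x ≤ (Real.sqrt (2*π) * t)⁻¹ * rexp (-t^2/2) := by
  have hint1 : IntegrableOn (fun x => rexp (-x^2/2)) (Set.Ioi t) := by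
    have h2 := integrable_exp_neg_mul_sq (b := 1/2) (by norm_num)
    have h3 : (fun x : ℝ => rexp (-(1/2) * x ^ 2)) = fun x => rexp (-x^2/2) := by
      funext x; ring_nf
    rw [h3] at h2; exact h2.integrableOn
  have hint2 : IntegrableOn (fun x => (x/t) * rexp (-x^2/2)) (Set.Ioi t) := by
    have h2 := integrable_mul_exp_neg_mul_sq (b := 1/2) (by norm_num)
    have h3 : (fun x : ℝ => x * rexp (-(1/2) * x ^ 2)) = fun x => x * rexp (-x^2/2) := by
      funext x; ring_nf
    rw [h3] at h2
    have h4 : (fun x : ℝ => (x/t) * rexp (-x^2/2)) = fun x => (x * rexp (-x^2/2))/t := by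
      funext x; ring
    rw [h4]
    exact (h2.integrableOn).div_const t
  have hmono : ∫ x in Set.Ioi t, rexp (-x^2/2) ≤ ∫ x in Set.Ioi t, (x/t) * rexp (-x^2/2) := by
    refine setIntegral_mono_on hint1 hint2 measurableSet_Ioi ?_
    intro x hx
    rw [Set.mem_Ioi] at hx
    nth_rewrite 1 [← one_mul (rexp (-x^2/2))]
    have : (1:ℝ) ≤ x/t := by rw [le_div_iff₀ ht]; linarith
    exact mul_le_mul_of_nonneg_right this (le_of_lt (Real.exp_pos _))
  have heq : ∫ x in Set.Ioi t, (x/t) * rexp (-x^2/2) = t⁻¹ * rexp (-t^2/2) := by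
    rw [show (fun x => (x/t) * rexp (-x^2/2)) = fun x => t⁻¹ * (x * rexp (-x^2/2)) by
      funext x; ring]
    rw [MeasureTheory.integral_const_mul, int_x_exp]
  calc ∫ x in Set.Ioi t, gaussianPDFReal 0 1 x
      = (Real.sqrt (2*π))⁻¹ * ∫ x in Set.Ioi t, rexp (-x^2/2) := by
        simp_rw [pdf_eq]; rw [MeasureTheory.integral_const_mul]
    _ ≤ (Real.sqrt (2*π))⁻¹ * (t⁻¹ * rexp (-t^2/2)) := by
        have h5 : (0:ℝ) ≤ (Real.sqrt (2*π))⁻¹ := by positivity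
        refine mul_le_mul_of_nonneg_left ?_ h5
        rw [← heq]; exact hmono
    _ = (Real.sqrt (2*π) * t)⁻¹ * rexp (-t^2/2) := by rw [mul_inv]; ring

lemma gauss_tail_two {t : ℝ} (ht : 0 < t) :
    gaussianReal 0 1 {x | t < |x|} ≤
      ENNReal.ofReal (2 * ((Real.sqrt (2*π) * t)⁻¹ * rexp (-t^2/2))) := by
  have hset : {x : ℝ | t < |x|} = Set.Iio (-t) ∪ Set.Ioi t := by
    ext x
    simp only [Set.mem_setOf_eq, Set.mem_union, Set.mem_Iio, Set.mem_Ioi]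
    rw [lt_abs]
    constructor
    · rintro (h | h); exacts [Or.inr h, Or.inl (by linarith)]
    · rintro (h | h); exacts [Or.inr (by linarith), Or.inl h]
  have hIio : ∫ x in Set.Iio (-t), gaussianPDFReal 0 1 x
      = ∫ x in Set.Ioi t, gaussianPDFReal 0 1 x := by
    have heven : ∀ x : ℝ, gaussianPDFReal 0 1 x = gaussianPDFReal 0 1 (-x) := by
      intro x; rw [pdf_eq, pdf_eq]; ring_nf
    calc ∫ x in Set.Iio (-t), gaussianPDFReal 0 1 x
        = ∫ x in Set.Iio (-t), gaussianPDFReal 0 1 (-x) := by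
          exact setIntegral_congr_fun measurableSet_Iio (fun x _ => heven x)
      _ = ∫ x in Set.Ioi t, gaussianPDFReal 0 1 x := by
          rw [← MeasureTheory.integral_Iic_eq_integral_Iio, integral_comp_neg_Iic,
            neg_neg]
  have hnn : 0 ≤ ∫ x in Set.Ioi t, gaussianPDFReal 0 1 x :=
    setIntegral_nonneg measurableSet_Ioi (fun x _ => gaussianPDFReal_nonneg 0 1 x)
  calc gaussianReal 0 1 {x | t < |x|}
      ≤ gaussianReal 0 1 (Set.Iio (-t)) + gaussianReal 0 1 (Set.Ioi t) := by
        rw [hset]; exact measure_union_le _ _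
    _ = ENNReal.ofReal (2 * ∫ x in Set.Ioi t, gaussianPDFReal 0 1 x) := by
        rw [gaussianReal_apply_eq_integral _ one_ne_zero, gaussianReal_apply_eq_integral _ one_ne_zero,
          hIio, ← ENNReal.ofReal_add hnn hnn]
        ring_nf
    _ ≤ _ := by
        apply ENNReal.ofReal_le_ofReal
        have := tail_le ht
        nlinarith [this, hnn]

lemma gauss_sq_int {a : ℝ} (ha : 0 ≤ a) :
    ∫ x, rexp (-a * x^2) ∂(gaussianReal 0 1) = (Real.sqrt (1+2*a))⁻¹ := by
  rw [gaussianReal_of_var_ne_zero _ one_ne_zero]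
  have hpdf : gaussianPDF 0 1 = fun x => ((gaussianPDFReal 0 1 x).toNNReal : ℝ≥0∞) := rfl
  rw [hpdf, integral_withDensity_eq_integral_smul
    ((measurable_gaussianPDFReal 0 1).real_toNNReal)]
  have h1 : ∀ x : ℝ, (gaussianPDFReal 0 1 x).toNNReal • rexp (-a * x^2)
      = (Real.sqrt (2*π))⁻¹ * rexp (-(a + 1/2) * x^2) := by
    intro x
    rw [NNReal.smul_def, smul_eq_mul, Real.coe_toNNReal _ (gaussianPDFReal_nonneg 0 1 x), pdf_eq,
      mul_assoc, ← Real.exp_add]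
    ring_nf
  simp_rw [h1]
  rw [MeasureTheory.integral_const_mul, integral_gaussian]
  have h2 : π / (a + 1/2) = (2*π) * (1+2*a)⁻¹ := by
    field_simp; ring
  have h3 : √(2 * π * (1 + 2 * a)⁻¹) = √2 * √π * (√(1+2*a))⁻¹ := by
    rw [Real.sqrt_mul (by positivity), Real.sqrt_inv, Real.sqrt_mul (by norm_num)]
  rw [h2, h3,
    show (√(2*π))⁻¹ * (√2 * √π * (√(1 + 2 * a))⁻¹)
      = ((√(2*π))⁻¹ * (√2 * √π)) * (√(1 + 2 * a))⁻¹ by ring,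
    Real.sqrt_mul (by norm_num : (0:ℝ) ≤ 2), inv_mul_cancel₀ (by positivity), one_mul]

end Helpers

/-- For a standard Gaussian vector `ξ ~ N(0, I_m)` with `m ≥ 2`, the probability that
`|ξ₁|/‖ξ‖ > γ*` is bounded by the probability that `‖ξ₋₁‖² ≤ (m-1)/2` plus
`(2/(γ*·√((m−1)π)))·(1 + γ*²)^{−(m−1)/2}`. -/
theorem stmt2 {Ω : Type*} [MeasureSpace Ω] [IsProbabilityMeasure (ℙ : Measure Ω)]
    (m : ℕ) [NeZero m] (hm : 2 ≤ m) (ξ : Ω → Fin m → ℝ)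
    (hmeas : ∀ i, Measurable fun ω => ξ ω i)
    (hindep : iIndepFun (fun i ω => ξ ω i) ℙ)
    (hlaw : ∀ i, Measure.map (fun ω => ξ ω i) ℙ = gaussianReal 0 1)
    (γ : ℝ) (hγ : 0 < γ) :
    (ℙ {ω | |ξ ω 0| / Real.sqrt (∑ i, ξ ω i ^ 2) > γ}).toReal ≤
      (ℙ {ω | ∑ i ∈ Finset.univ.erase (0 : Fin m), ξ ω i ^ 2 ≤ ((m : ℝ) - 1) / 2}).toReal
        + (2 / (γ * Real.sqrt (((m : ℝ) - 1) * Real.pi))) *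
          (1 + γ ^ 2) ^ (-(((m : ℝ) - 1) / 2)) := by
  classical
  have hm1 : (1:ℝ) ≤ (m:ℝ) - 1 := by
    have : (2:ℝ) ≤ (m:ℝ) := by exact_mod_cast hm
    linarith
  set c : ℝ := ((m:ℝ)-1)/2 with hc_def
  have hc : 0 < c := by rw [hc_def]; linarith
  set K : ℝ := 2 / (γ * Real.sqrt (((m : ℝ) - 1) * Real.pi)) with hK_def
  set M : ℝ := (1 + γ ^ 2) ^ (-(((m : ℝ) - 1) / 2)) with hM_def
  have hKnn : 0 ≤ K := by
    rw [hK_def]; positivity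
  have hMnn : 0 ≤ M := by
    rw [hM_def]; positivity
  set S : Ω → ℝ := fun ω => ∑ i ∈ Finset.univ.erase (0 : Fin m), ξ ω i ^ 2 with hS_def
  have hSnn : ∀ ω, 0 ≤ S ω := fun ω => Finset.sum_nonneg (fun i _ => sq_nonneg _)
  have hSmeas : Measurable S := Finset.measurable_sum _ (fun i _ => (hmeas i).pow_const 2)
  have hXmeas : Measurable (fun ω => ξ ω 0) := hmeas 0
  -- event inclusion
  have hsub : {ω | |ξ ω 0| / Real.sqrt (∑ i, ξ ω i ^ 2) > γ}
      ⊆ {ω | S ω ≤ c} ∪ {ω | γ * Real.sqrt (S ω) < |ξ ω 0| ∧ c < S ω} := by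
    intro ω hω
    simp only [Set.mem_setOf_eq, Set.mem_union]
    by_cases hS : S ω ≤ c
    · exact Or.inl hS
    push_neg at hS
    refine Or.inr ⟨?_, hS⟩
    have hSig : ∑ i, ξ ω i ^ 2 = ξ ω 0 ^ 2 + S ω :=
      (Finset.add_sum_erase _ _ (Finset.mem_univ 0)).symm
    have hpos : 0 < ∑ i, ξ ω i ^ 2 := by
      rw [hSig]; nlinarith [sq_nonneg (ξ ω 0), hc.trans hS]
    have hsq : 0 < Real.sqrt (∑ i, ξ ω i ^ 2) := Real.sqrt_pos.mpr hpos
    rw [Set.mem_setOf_eq, gt_iff_lt, lt_div_iff₀ hsq] at hω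
    refine lt_of_le_of_lt ?_ hω
    refine mul_le_mul_of_nonneg_left (Real.sqrt_le_sqrt ?_) hγ.le
    rw [hSig]; nlinarith [sq_nonneg (ξ ω 0)]
  -- independence of X and S
  have hindep2 : IndepFun (fun ω => ξ ω 0) S ℙ := by
    have hgmeas : ∀ i : Fin m, Measurable (fun x : ℝ => if i = 0 then x else x ^ 2) := by
      intro i
      split
      · exact measurable_id
      · exact measurable_id.pow_const 2
    have h1 : iIndepFun
        (fun i => (fun x : ℝ => if i = 0 then x else x ^ 2) ∘ (fun ω => ξ ω i)) ℙ :=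
      hindep.comp _ hgmeas
    have h2 := (h1.indepFun_finset_sum_of_notMem
      (fun i => (hgmeas i).comp (hmeas i)) (Finset.notMem_erase (0 : Fin m) Finset.univ)).symm
    have e1 : ((fun x : ℝ => if (0 : Fin m) = 0 then x else x ^ 2) ∘ (fun ω => ξ ω 0))
        = fun ω => ξ ω 0 := by
      funext ω; simp
    have e2 : (∑ j ∈ Finset.univ.erase (0 : Fin m),
        (fun x : ℝ => if j = 0 then x else x ^ 2) ∘ (fun ω => ξ ω j)) = S := by
      funext ω
      rw [Finset.sum_apply]
      refine Finset.sum_congr rfl (fun j hj => ?_)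
      simp [Finset.ne_of_mem_erase hj]
    rw [e1, e2] at h2
    exact h2
  -- law of the pair
  have hmap : Measure.map (fun ω => (ξ ω 0, S ω)) ℙ
      = (gaussianReal 0 1).prod (Measure.map S ℙ) := by
    rw [← hlaw 0]
    exact (indepFun_iff_map_prod_eq_prod_map_map hXmeas.aemeasurable hSmeas.aemeasurable).mp
      hindep2
  set ν : Measure ℝ := Measure.map S ℙ with hnu_def
  have hnuprob : IsProbabilityMeasure ν := Measure.isProbabilityMeasure_map hSmeas.aemeasurable
  set T : Set (ℝ × ℝ) := {p : ℝ × ℝ | γ * Real.sqrt p.2 < |p.1| ∧ c < p.2} with hT_def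
  have hT : MeasurableSet T := by
    refine MeasurableSet.inter ?_ ?_
    · exact measurableSet_lt (measurable_const.mul measurable_snd.sqrt) measurable_fst.abs
    · exact measurableSet_lt measurable_const measurable_snd
  have hBmeas : ℙ {ω | γ * Real.sqrt (S ω) < |ξ ω 0| ∧ c < S ω} = ((gaussianReal 0 1).prod ν) T := by
    rw [hnu_def, ← hmap, Measure.map_apply (hXmeas.prodMk hSmeas) hT]
    rfl
  have hinner : ∀ s : ℝ, gaussianReal 0 1 ((fun x => (x, s)) ⁻¹' T)
      ≤ ENNReal.ofReal (K * rexp (-(γ^2/2) * s)) := by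
    intro s
    by_cases hs : c < s
    · have hpre : ((fun x : ℝ => (x, s)) ⁻¹' T) = {x : ℝ | γ * Real.sqrt s < |x|} := by
        ext x; simp [hT_def, hs]
      have hts : 0 < γ * Real.sqrt s := mul_pos hγ (Real.sqrt_pos.mpr (hc.trans hs))
      have h1 := gauss_tail_two hts
      rw [hpre]
      refine h1.trans (ENNReal.ofReal_le_ofReal ?_)
      have hsq : -(γ * Real.sqrt s)^2/2 = -(γ^2/2) * s := by
        rw [mul_pow, Real.sq_sqrt (hc.trans hs).le]; ring
      rw [hsq]
      have hbb : γ * Real.sqrt (((m:ℝ)-1)*π) ≤ Real.sqrt (2*π) * (γ * Real.sqrt s) := by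
        have h2 : Real.sqrt (((m:ℝ)-1)*π) = Real.sqrt (2*π) * Real.sqrt c := by
          rw [← Real.sqrt_mul (by positivity)]
          congr 1
          rw [hc_def]; field_simp
        rw [h2]
        have h3 : Real.sqrt c ≤ Real.sqrt s := Real.sqrt_le_sqrt hs.le
        calc γ * (Real.sqrt (2*π) * Real.sqrt c) = (γ * Real.sqrt (2*π)) * Real.sqrt c := by ring
          _ ≤ (γ * Real.sqrt (2*π)) * Real.sqrt s := mul_le_mul_of_nonneg_left h3 (by positivity)
          _ = Real.sqrt (2*π) * (γ * Real.sqrt s) := by ring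
      have hA : 0 < γ * Real.sqrt (((m:ℝ)-1)*π) := by positivity
      have h4 : (Real.sqrt (2*π) * (γ * Real.sqrt s))⁻¹ ≤ (γ * Real.sqrt (((m:ℝ)-1)*π))⁻¹ :=
        inv_anti₀ hA hbb
      calc 2 * ((Real.sqrt (2*π) * (γ * Real.sqrt s))⁻¹ * rexp (-(γ^2/2) * s))
          ≤ 2 * ((γ * Real.sqrt (((m:ℝ)-1)*π))⁻¹ * rexp (-(γ^2/2) * s)) := by
            have := Real.exp_pos (-(γ^2/2) * s)
            nlinarith
        _ = K * rexp (-(γ^2/2) * s) := by rw [hK_def]; field_simp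
    · have hpre : ((fun x : ℝ => (x, s)) ⁻¹' T) = ∅ := by
        ext x; simp [hT_def, hs]
      rw [hpre]
      simp
  have hint : Integrable (fun s : ℝ => K * rexp (-(γ^2/2) * s)) ν := by
    have hms : Measurable (fun s : ℝ => K * rexp (-(γ^2/2) * s)) :=
      (Real.measurable_exp.comp (measurable_id.const_mul (-(γ^2/2)))).const_mul K
    rw [hnu_def, integrable_map_measure hms.aestronglyMeasurable hSmeas.aemeasurable]
    refine Integrable.mono' (integrable_const K) (hms.comp hSmeas).aestronglyMeasurable
      (ae_of_all _ (fun ω => ?_))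
    simp only [Function.comp_apply, Real.norm_eq_abs, abs_mul, abs_of_nonneg hKnn,
      Real.abs_exp]
    nth_rewrite 2 [← mul_one K]
    refine mul_le_mul_of_nonneg_left ?_ hKnn
    rw [← Real.exp_zero]
    apply Real.exp_le_exp.mpr
    nlinarith [hSnn ω, sq_nonneg γ]
  have hmgf : ∫ s, rexp (-(γ^2/2) * s) ∂ν = M := by
    have hms2 : Measurable (fun s : ℝ => rexp (-(γ^2/2) * s)) :=
      Real.measurable_exp.comp (measurable_id.const_mul (-(γ^2/2)))
    have h0 : ∫ s, rexp (-(γ^2/2) * s) ∂ν = mgf S ℙ (-(γ^2/2)) := by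
      rw [hnu_def, integral_map hSmeas.aemeasurable hms2.aestronglyMeasurable]
      rfl
    have hW : iIndepFun
        (fun i => (fun x : ℝ => x^2) ∘ (fun ω => ξ ω i)) ℙ :=
      hindep.comp _ (fun _ => measurable_id.pow_const 2)
    have hSsum : S = ∑ i ∈ Finset.univ.erase (0 : Fin m),
        (fun x : ℝ => x^2) ∘ (fun ω => ξ ω i) := by
      funext ω; rw [Finset.sum_apply]; rfl
    have hsum := hW.mgf_sum (t := -(γ^2/2))
      (fun i => (measurable_id.pow_const 2).comp (hmeas i)) (Finset.univ.erase (0 : Fin m))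
    have hfac : ∀ i : Fin m, mgf ((fun x : ℝ => x^2) ∘ (fun ω => ξ ω i)) ℙ (-(γ^2/2))
        = (Real.sqrt (1+γ^2))⁻¹ := by
      intro i
      have hstep : mgf ((fun x : ℝ => x^2) ∘ (fun ω => ξ ω i)) ℙ (-(γ^2/2))
          = ∫ x, rexp (-(γ^2/2) * x^2) ∂(Measure.map (fun ω => ξ ω i) ℙ) := by
        have hmx : Measurable (fun x : ℝ => rexp (-(γ^2/2) * x^2)) :=
          Real.measurable_exp.comp ((measurable_id.pow_const 2).const_mul _)
        rw [integral_map (hmeas i).aemeasurable hmx.aestronglyMeasurable]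
        rfl
      rw [hstep, hlaw i, gauss_sq_int (by positivity)]
      congr 1
      ring_nf
    rw [h0, hSsum, hsum, Finset.prod_congr rfl (fun i _ => hfac i), Finset.prod_const]
    have hcard : (Finset.univ.erase (0 : Fin m)).card = m - 1 := by
      rw [Finset.card_erase_of_mem (Finset.mem_univ _), Finset.card_univ, Fintype.card_fin]
    rw [hcard, hM_def]
    have hx : (0:ℝ) < 1 + γ^2 := by positivity
    have hcast : ((m - 1 : ℕ) : ℝ) = (m:ℝ) - 1 := by
      have : 1 ≤ m := by omega
      push_cast [this]; ring
    rw [Real.sqrt_eq_rpow, ← Real.rpow_neg_one ((1+γ^2) ^ ((1:ℝ)/2)), ← Real.rpow_mul hx.le,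
      ← Real.rpow_natCast ((1+γ^2) ^ ((1:ℝ)/2 * (-1:ℝ))) (m-1), ← Real.rpow_mul hx.le]
    congr 1
    rw [hcast]; ring
  have hBbound : ℙ {ω | γ * Real.sqrt (S ω) < |ξ ω 0| ∧ c < S ω}
      ≤ ENNReal.ofReal (K * M) := by
    rw [hBmeas, Measure.prod_apply_symm hT]
    calc ∫⁻ s, gaussianReal 0 1 ((fun x => (x, s)) ⁻¹' T) ∂ν
        ≤ ∫⁻ s, ENNReal.ofReal (K * rexp (-(γ^2/2) * s)) ∂ν := lintegral_mono hinner
      _ = ENNReal.ofReal (∫ s, K * rexp (-(γ^2/2) * s) ∂ν) := by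
          rw [← ofReal_integral_eq_lintegral_ofReal hint (ae_of_all _ (fun s => by positivity))]
      _ = ENNReal.ofReal (K * M) := by
          rw [integral_const_mul, hmgf]
  -- combine
  have hmain : ℙ {ω | |ξ ω 0| / Real.sqrt (∑ i, ξ ω i ^ 2) > γ}
      ≤ ℙ {ω | S ω ≤ c} + ENNReal.ofReal (K * M) := by
    refine le_trans (measure_mono hsub) ?_
    refine le_trans (measure_union_le _ _) ?_
    exact add_le_add le_rfl hBbound
  calc (ℙ {ω | |ξ ω 0| / Real.sqrt (∑ i, ξ ω i ^ 2) > γ}).toReal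
      ≤ (ℙ {ω | S ω ≤ c} + ENNReal.ofReal (K * M)).toReal := by
        refine ENNReal.toReal_mono ?_ hmain
        exact ENNReal.add_ne_top.mpr ⟨measure_ne_top _ _, ENNReal.ofReal_ne_top⟩
    _ = (ℙ {ω | S ω ≤ c}).toReal + K * M := by
        rw [ENNReal.toReal_add (measure_ne_top _ _) ENNReal.ofReal_ne_top,
          ENNReal.toReal_ofReal (mul_nonneg hKnn hMnn)]
end

section
/- Let X, X̃ ∈ ℝ^{n×p}, and for each j let P₋ⱼ be the orthogonal projection onto the span of the columns of X other than xⱼ. Let G̃^{(j)} be the Gram matrix of (x₁,…,x_{j−1}, xⱼ, x̃ⱼ, x_{j+1},…,x_p), and let Dⱼ be the 2×2 submatrix of (G̃^{(j)})⁻¹ corresponding to the rows/columns of xⱼ and x̃ⱼ, with σ_{1j} = Dⱼ(1,1) and σ_{2j} = Dⱼ(1,2). If xⱼᵀ(I − P₋ⱼ)x̃ⱼ = 0, then σ_{1j} equals the j-th diagonal entry of (XᵀX)⁻¹ and σ_{2j} = 0. -/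
open Matrix

/-- Read off a column of the inverse from a `mulVec` equation. -/
lemma aux_inv_col {m : Type*} [Fintype m] [DecidableEq m] (M : Matrix m m ℝ)
    (hM : IsUnit M.det) (b : m → ℝ) (j : m) (ω : ℝ)
    (h : M *ᵥ b = fun k => if k = j then ω else 0) :
    ∀ k, b k = M⁻¹ k j * ω := by
  intro k
  have h2 : M⁻¹ *ᵥ (M *ᵥ b) = b := by
    rw [Matrix.mulVec_mulVec, Matrix.nonsing_inv_mul M hM, Matrix.one_mulVec]
  rw [h] at h2
  have h3 := congrFun h2 k
  simpa [Matrix.mulVec, dotProduct, mul_ite, Finset.sum_ite_eq'] using h3.symm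

/-- If the residual of `xⱼ` (after projecting out the other columns of `X`) is orthogonal
to `x̃ⱼ`, then in the inverse Gram matrix of `(x₁,…,xⱼ,x̃ⱼ,…,x_p)` the diagonal entry at
`xⱼ` equals `((XᵀX)⁻¹)ⱼⱼ` and the off-diagonal entry between `xⱼ` and `x̃ⱼ` is zero. -/
theorem stmt5 {n p : ℕ} (X Xt : Matrix (Fin n) (Fin p) ℝ) (j : Fin p)
    (hG : (Xᵀ * X).PosDef) :
    letI x : Fin p → EuclideanSpace ℝ (Fin n) :=
      fun k => (WithLp.equiv 2 (Fin n → ℝ)).symm (fun i => X i k)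
    letI xt : EuclideanSpace ℝ (Fin n) :=
      (WithLp.equiv 2 (Fin n → ℝ)).symm (fun i => Xt i j)
    letI K : Submodule ℝ (EuclideanSpace ℝ (Fin n)) :=
      Submodule.span ℝ {v | ∃ k, k ≠ j ∧ v = x k}
    letI Y : Matrix (Fin n) (Fin p ⊕ Unit) ℝ :=
      Matrix.of fun i => Sum.elim (fun k => X i k) (fun _ => Xt i j)
    (Yᵀ * Y).PosDef →
    inner (𝕜 := ℝ) (x j - (K.orthogonalProjection (x j) : EuclideanSpace ℝ (Fin n))) xt = 0 →
    (Yᵀ * Y)⁻¹ (Sum.inl j) (Sum.inl j) = (Xᵀ * X)⁻¹ j j ∧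
      (Yᵀ * Y)⁻¹ (Sum.inl j) (Sum.inr ()) = 0 := by
  intro hY hperp
  classical
  set x : Fin p → EuclideanSpace ℝ (Fin n) :=
    fun k => (WithLp.equiv 2 (Fin n → ℝ)).symm (fun i => X i k) with hxdef
  set xt : EuclideanSpace ℝ (Fin n) :=
    (WithLp.equiv 2 (Fin n → ℝ)).symm (fun i => Xt i j) with hxtdef
  set K : Submodule ℝ (EuclideanSpace ℝ (Fin n)) :=
    Submodule.span ℝ {v | ∃ k, k ≠ j ∧ v = x k} with hKdef
  set Y : Matrix (Fin n) (Fin p ⊕ Unit) ℝ :=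
    Matrix.of fun i => Sum.elim (fun k => X i k) (fun _ => Xt i j) with hYdef
  have hx : ∀ k i, x k i = X i k := fun _ _ => rfl
  have hxt : ∀ i, xt i = Xt i j := fun _ => rfl
  set pr : EuclideanSpace ℝ (Fin n) :=
    (K.orthogonalProjection (x j) : EuclideanSpace ℝ (Fin n)) with hprdef
  set r : EuclideanSpace ℝ (Fin n) := x j - pr with hrdef
  have hrK : r ∈ Kᗮ := K.sub_starProjection_mem_orthogonal (x j)
  have hprK : pr ∈ K := (K.orthogonalProjection (x j)).2
  -- inner products of columns with r
  have hxkK : ∀ k, k ≠ j → x k ∈ K := fun k hk =>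
    Submodule.subset_span ⟨k, hk, rfl⟩
  have hinner0 : ∀ k, k ≠ j → (inner (𝕜 := ℝ) (x k) r) = 0 := fun k hk =>
    (Submodule.mem_orthogonal K r).1 hrK (x k) (hxkK k hk)
  have hinnert : (inner (𝕜 := ℝ) xt r) = 0 := by
    rw [real_inner_comm]; exact hperp
  -- extract coefficients of pr
  have hset : {v | ∃ k, k ≠ j ∧ v = x k} =
      Set.range (fun k : {k : Fin p // k ≠ j} => x k.1) := by
    ext v
    constructor
    · rintro ⟨k, hk, rfl⟩; exact ⟨⟨k, hk⟩, rfl⟩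
    · rintro ⟨⟨k, hk⟩, rfl⟩; exact ⟨k, hk, rfl⟩
  have hprK' : pr ∈ Submodule.span ℝ
      (Set.range (fun k : {k : Fin p // k ≠ j} => x k.1)) := by
    rw [← hset]; exact hprK
  obtain ⟨c, hc⟩ := Submodule.mem_span_range_iff_exists_fun ℝ |>.1 hprK'
  set b : Fin p → ℝ := fun k => if h : k = j then 1 else -(c ⟨k, h⟩) with hbdef
  have hbj : b j = 1 := by simp [hbdef]
  have hsum : ∑ k, b k • x k = r := by
    have h1 : ∑ k, b k • x k
        = b j • x j + ∑ k ∈ Finset.univ.erase j, b k • x k :=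
      (Finset.add_sum_erase _ _ (Finset.mem_univ j)).symm
    have h2 : ∑ k ∈ Finset.univ.erase j, b k • x k = -pr := by
      rw [Finset.sum_subtype (Finset.univ.erase j)
        (p := fun k => k ≠ j) (by simp) (fun k => b k • x k)]
      rw [← hc, ← Finset.sum_neg_distrib]
      refine Finset.sum_congr rfl fun k _ => ?_
      rcases k with ⟨k, hk⟩
      rw [hbdef]
      simp [dif_neg hk, neg_smul]
    rw [h1, h2, hbj, one_smul, hrdef, sub_eq_add_neg]
  -- Gram entries as inner products
  have hgram : ∀ k m : Fin p, (Xᵀ * X) k m = (inner (𝕜 := ℝ) (x k) (x m)) := by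
    intro k m
    simp [Matrix.mul_apply, PiLp.inner_apply, hx, RCLike.inner_apply, mul_comm]
  set ω : ℝ := inner (𝕜 := ℝ) (x j) r with hω
  have hGb : (Xᵀ * X) *ᵥ b = fun k => if k = j then ω else 0 := by
    funext k
    have : ((Xᵀ * X) *ᵥ b) k = inner (𝕜 := ℝ) (x k) r := by
      rw [← hsum, inner_sum]
      simp only [Matrix.mulVec, dotProduct, hgram, real_inner_smul_right]
      exact Finset.sum_congr rfl fun m _ => mul_comm _ _
    rw [this]
    by_cases hkj : k = j
    · subst hkj; rw [if_pos rfl, hω]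
    · rw [if_neg hkj]; exact hinner0 k hkj
  -- same for the extended matrix
  set b' : Fin p ⊕ Unit → ℝ := Sum.elim b (fun _ => 0) with hb'def
  have hgramY : ∀ s t : Fin p ⊕ Unit, (Yᵀ * Y) s t =
      (inner (𝕜 := ℝ) (Sum.elim x (fun _ => xt) s) (Sum.elim x (fun _ => xt) t)) := by
    intro s t
    rcases s with k | u <;> rcases t with m | v <;>
      simp [Matrix.mul_apply, PiLp.inner_apply, hx, hxt, RCLike.inner_apply, mul_comm, Y, -inner_self_eq_norm_sq_to_K, -real_inner_self_eq_norm_sq]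
  have hsum' : ∑ s : Fin p ⊕ Unit, b' s • Sum.elim x (fun _ => xt) s = r := by
    rw [Fintype.sum_sum_type]
    simp only [hb'def, Sum.elim_inl, Sum.elim_inr, zero_smul, smul_zero,
      Finset.sum_const_zero, add_zero]
    exact hsum
  have hYb : (Yᵀ * Y) *ᵥ b' = fun s => if s = Sum.inl j then ω else 0 := by
    funext s
    have : ((Yᵀ * Y) *ᵥ b') s = inner (𝕜 := ℝ) (Sum.elim x (fun _ => xt) s) r := by
      rw [← hsum', inner_sum]
      simp only [Matrix.mulVec, dotProduct, hgramY, real_inner_smul_right]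
      exact Finset.sum_congr rfl fun m _ => mul_comm _ _
    rw [this]
    rcases s with k | u
    · by_cases hkj : k = j
      · subst hkj
        rw [if_pos rfl, hω, Sum.elim_inl]
      · rw [if_neg (by simp [hkj]), Sum.elim_inl]
        exact hinner0 k hkj
    · rw [if_neg (by simp), Sum.elim_inr]
      exact hinnert
  -- invertibility
  have hdetX : IsUnit (Xᵀ * X).det := isUnit_iff_ne_zero.2 hG.det_pos.ne'
  have hdetY : IsUnit (Yᵀ * Y).det := isUnit_iff_ne_zero.2 hY.det_pos.ne'
  have hcolX := aux_inv_col (Xᵀ * X) hdetX b j ω hGb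
  have hcolY := aux_inv_col (Yᵀ * Y) hdetY b' (Sum.inl j) ω hYb
  have h1 : (Xᵀ * X)⁻¹ j j * ω = 1 := by rw [← hcolX j, hbj]
  have h2 : (Yᵀ * Y)⁻¹ (Sum.inl j) (Sum.inl j) * ω = 1 := by
    rw [← hcolY (Sum.inl j)]; simp [hb'def, hbj]
  have hω0 : ω ≠ 0 := by
    intro h; rw [h, mul_zero] at h1; exact one_ne_zero h1.symm
  have hYsymm : (Yᵀ * Y)⁻¹ (Sum.inl j) (Sum.inr ()) = (Yᵀ * Y)⁻¹ (Sum.inr ()) (Sum.inl j) := by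
    have hsy : (Yᵀ * Y)ᵀ = Yᵀ * Y := by
      rw [Matrix.transpose_mul, Matrix.transpose_transpose]
    calc (Yᵀ * Y)⁻¹ (Sum.inl j) (Sum.inr ())
        = ((Yᵀ * Y)⁻¹)ᵀ (Sum.inr ()) (Sum.inl j) := rfl
      _ = ((Yᵀ * Y)ᵀ)⁻¹ (Sum.inr ()) (Sum.inl j) := by rw [Matrix.transpose_nonsing_inv]
      _ = (Yᵀ * Y)⁻¹ (Sum.inr ()) (Sum.inl j) := by rw [hsy]
  constructor
  · have := h1.trans h2.symm
    exact (mul_right_cancel₀ hω0 this.symm)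
  · rw [hYsymm]
    have h3 := hcolY (Sum.inr ())
    simp only [hb'def, Sum.elim_inr] at h3
    rcases mul_eq_zero.1 h3.symm with h | h
    · exact h
    · exact absurd h hω0
end

section
/- Let X ∈ ℝ^{n×p} have full column rank and define zⱼ = (I − P₋ⱼ)xⱼ. For X̃ ∈ ℝ^{n×p}, the condition x̃ⱼᵀ(I − P₋ⱼ)xⱼ = 0 for every j = 1,…,p holds if the knockoff-type conditions x̃ⱼᵀxⱼ = ‖P₋ⱼxⱼ‖² and x̃ⱼᵀx_k = xⱼᵀx_k (k ≠ j) hold; equivalently, with G = XᵀX, the choice diag(s) = [diag(G⁻¹)]⁻¹ in the knockoff construction XᵀX̃ = G − diag(s) yields x̃ⱼᵀ(I − P₋ⱼ)xⱼ = 0 for all j. -/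
open Matrix

/-- If `w` is orthogonal to every element of `T`, it is orthogonal to the span of `T`. -/
lemma inner_span_eq_zero {E : Type*} [NormedAddCommGroup E] [InnerProductSpace ℝ E]
    {T : Set E} {w : E} (h : ∀ v ∈ T, inner (𝕜 := ℝ) v w = 0) :
    ∀ v ∈ Submodule.span ℝ T, inner (𝕜 := ℝ) v w = 0 := by
  intro v hv
  induction hv using Submodule.span_induction with
  | mem v hv => exact h v hv
  | zero => simp
  | add a b _ _ ha hb => rw [inner_add_left, ha, hb, add_zero]
  | smul c a _ ha => rw [inner_smul_left, ha, mul_zero]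

/-- Under the knockoff constraint `XᵀX̃ = G − diag(s)` with `G = XᵀX` positive definite,
the orthogonality conditions `x̃ⱼᵀ(I − P₋ⱼ)xⱼ = 0` for all `j` hold if and only if
`diag(s) = [diag(G⁻¹)]⁻¹`, i.e. `sⱼ = ((G⁻¹)ⱼⱼ)⁻¹` for all `j`
(the conditional-independence knockoff). -/
theorem stmt7 {n p : ℕ} (X Xt : Matrix (Fin n) (Fin p) ℝ) (s : Fin p → ℝ)
    (hpd : (Xᵀ * X).PosDef)
    (hknock : Xᵀ * Xt = Xᵀ * X - Matrix.diagonal s) :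
    letI x : Fin p → EuclideanSpace ℝ (Fin n) :=
      fun k => (WithLp.equiv 2 (Fin n → ℝ)).symm (fun i => X i k)
    letI xt : Fin p → EuclideanSpace ℝ (Fin n) :=
      fun k => (WithLp.equiv 2 (Fin n → ℝ)).symm (fun i => Xt i k)
    letI K : Fin p → Submodule ℝ (EuclideanSpace ℝ (Fin n)) :=
      fun j => Submodule.span ℝ {v | ∃ k, k ≠ j ∧ v = x k}
    (∀ j : Fin p,
        inner (𝕜 := ℝ) (xt j)
          (x j - (Submodule.orthogonalProjectionOnto (K j) (x j) : EuclideanSpace ℝ (Fin n))) = 0)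
      ↔ (∀ j : Fin p, s j = ((Xᵀ * X)⁻¹ j j)⁻¹) := by
  set x : Fin p → EuclideanSpace ℝ (Fin n) :=
    fun k => (WithLp.equiv 2 (Fin n → ℝ)).symm (fun i => X i k) with hx
  set xt : Fin p → EuclideanSpace ℝ (Fin n) :=
    fun k => (WithLp.equiv 2 (Fin n → ℝ)).symm (fun i => Xt i k) with hxt
  set K : Fin p → Submodule ℝ (EuclideanSpace ℝ (Fin n)) :=
    fun j => Submodule.span ℝ {v | ∃ k, k ≠ j ∧ v = x k} with hK
  set G := Xᵀ * X with hG
  have hdet : IsUnit G.det := isUnit_iff_ne_zero.mpr (ne_of_gt hpd.det_pos)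
  have hGi : G * G⁻¹ = 1 := Matrix.mul_nonsing_inv _ hdet
  -- inner products of columns
  have hxx : ∀ a b : Fin p, inner (𝕜 := ℝ) (x a) (x b) = G a b := by
    intro a b
    simp only [x, PiLp.inner_apply, RCLike.inner_apply, starRingEnd_apply, star_trivial,
      WithLp.equiv_symm_apply, WithLp.ofLp_toLp, hG, Matrix.mul_apply, Matrix.transpose_apply]
    exact Finset.sum_congr rfl fun _ _ => mul_comm _ _
  have hxtx : ∀ a b : Fin p, inner (𝕜 := ℝ) (x a) (xt b) = G a b - Matrix.diagonal s a b := by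
    intro a b
    have := congrFun (congrFun hknock a) b
    simp only [Matrix.mul_apply, Matrix.transpose_apply, Matrix.sub_apply] at this
    simp only [x, xt, PiLp.inner_apply, RCLike.inner_apply, starRingEnd_apply, star_trivial,
      WithLp.equiv_symm_apply, WithLp.ofLp_toLp]
    rw [← this]; exact Finset.sum_congr rfl fun _ _ => mul_comm _ _
  suffices main : ∀ j : Fin p,
      (inner (𝕜 := ℝ) (xt j)
        (x j - (Submodule.orthogonalProjectionOnto (K j) (x j) : EuclideanSpace ℝ (Fin n))) = 0)
      ↔ s j = (G⁻¹ j j)⁻¹ from forall_congr' main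
  intro j
  set P : EuclideanSpace ℝ (Fin n) :=
    (Submodule.orthogonalProjectionOnto (K j) (x j) : EuclideanSpace ℝ (Fin n)) with hP
  set q : EuclideanSpace ℝ (Fin n) := x j - P with hq
  have hqK : q ∈ (K j)ᗮ := Submodule.sub_starProjection_mem_orthogonal (x j)
  have hPK : P ∈ K j := (Submodule.orthogonalProjectionOnto (K j) (x j)).2
  have hxkq : ∀ k, k ≠ j → inner (𝕜 := ℝ) (x k) q = 0 := by
    intro k hk
    exact (Submodule.mem_orthogonal _ _).mp hqK _ (Submodule.subset_span ⟨k, hk, rfl⟩)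
  have hPq : inner (𝕜 := ℝ) P q = 0 := (Submodule.mem_orthogonal _ _).mp hqK _ hPK
  set r : ℝ := inner (𝕜 := ℝ) q q with hr
  have hxjq : inner (𝕜 := ℝ) (x j) q = r := by
    have : x j = q + P := by rw [hq]; abel
    rw [this, inner_add_left, hPq, add_zero, hr]
  -- the dual vector w
  set c : Fin p → ℝ := fun k => G⁻¹ k j with hc
  set w : EuclideanSpace ℝ (Fin n) := ∑ k, c k • x k with hw
  have hxw : ∀ a : Fin p, inner (𝕜 := ℝ) (x a) w = (1 : Matrix (Fin p) (Fin p) ℝ) a j := by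
    intro a
    rw [hw, inner_sum]
    simp only [inner_smul_right, hxx]
    rw [← hGi, Matrix.mul_apply]
    exact Finset.sum_congr rfl fun k _ => mul_comm _ _
  have hwK : ∀ v ∈ K j, inner (𝕜 := ℝ) v w = 0 := by
    apply inner_span_eq_zero
    rintro v ⟨k, hk, rfl⟩
    rw [hxw k]; exact Matrix.one_apply_ne hk
  have hqw : inner (𝕜 := ℝ) q w = 1 := by
    rw [hq, inner_sub_left, hxw j, hwK P hPK, Matrix.one_apply_eq, sub_zero]
  have hqne : q ≠ 0 := by
    intro h
    rw [h, inner_zero_left] at hqw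
    exact zero_ne_one hqw
  have hrpos : 0 < r := lt_of_le_of_ne real_inner_self_nonneg
    (fun h => hqne (inner_self_eq_zero.mp h.symm))
  have hrne : r ≠ 0 := ne_of_gt hrpos
  have hww : inner (𝕜 := ℝ) w w = G⁻¹ j j := by
    conv_lhs => rw [hw, sum_inner]
    simp only [real_inner_smul_left, ← hw, hxw]
    rw [Finset.sum_eq_single j]
    · rw [Matrix.one_apply_eq, mul_one]
    · intro k _ hk
      rw [Matrix.one_apply_ne hk, mul_zero]
    · intro h; exact absurd (Finset.mem_univ j) h
  -- the difference d is zero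
  set d : EuclideanSpace ℝ (Fin n) := w - r⁻¹ • q with hd
  have hxkd : ∀ k, inner (𝕜 := ℝ) (x k) d = 0 := by
    intro k
    rw [hd, inner_sub_right, inner_smul_right, hxw k]
    by_cases hk : k = j
    · subst hk
      rw [hxjq, Matrix.one_apply_eq, inv_mul_cancel₀ hrne, sub_self]
    · rw [hxkq k hk, Matrix.one_apply_ne hk, mul_zero, sub_zero]
  have hdS : d ∈ Submodule.span ℝ (Set.range x) := by
    apply Submodule.sub_mem
    · rw [hw]
      exact Submodule.sum_mem _ fun k _ =>
        Submodule.smul_mem _ _ (Submodule.subset_span ⟨k, rfl⟩)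
    · apply Submodule.smul_mem
      rw [hq]
      apply Submodule.sub_mem
      · exact Submodule.subset_span ⟨j, rfl⟩
      · refine Submodule.span_mono ?_ hPK
        rintro v ⟨k, _, rfl⟩
        exact ⟨k, rfl⟩
  have hdd : inner (𝕜 := ℝ) d d = 0 := by
    refine inner_span_eq_zero ?_ d hdS
    rintro v ⟨k, rfl⟩
    exact hxkd k
  have hd0 : d = 0 := inner_self_eq_zero.mp hdd
  have hw_eq : w = r⁻¹ • q := by rwa [hd, sub_eq_zero] at hd0
  have hGinvjj : G⁻¹ j j = r⁻¹ := by
    rw [← hww, hw_eq, real_inner_smul_left, real_inner_smul_right, ← hr,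
      inv_mul_cancel₀ hrne, mul_one]
  -- the knockoff inner product
  have hxtP : inner (𝕜 := ℝ) (xt j) P = inner (𝕜 := ℝ) (x j) P := by
    have horth : ∀ v ∈ K j, inner (𝕜 := ℝ) v (xt j - x j) = 0 := by
      apply inner_span_eq_zero
      rintro v ⟨k, hk, rfl⟩
      rw [inner_sub_right, hxtx, hxx, Matrix.diagonal_apply_ne _ hk, sub_zero, sub_self]
    have h0 : inner (𝕜 := ℝ) (xt j - x j) P = 0 := by
      rw [real_inner_comm]; exact horth P hPK
    rw [inner_sub_left] at h0
    linarith
  have hxtq : inner (𝕜 := ℝ) (xt j) q = r - s j := by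
    have h1 : inner (𝕜 := ℝ) (xt j) (x j) = G j j - s j := by
      rw [real_inner_comm, hxtx, Matrix.diagonal_apply_eq]
    have h2 : inner (𝕜 := ℝ) (x j) P = G j j - r := by
      have : inner (𝕜 := ℝ) (x j) q = inner (𝕜 := ℝ) (x j) (x j) - inner (𝕜 := ℝ) (x j) P := by
        rw [hq, inner_sub_right]
      rw [hxjq, hxx] at this
      linarith
    rw [hq, inner_sub_right, h1, hxtP, h2]
    ring
  rw [hxtq, hGinvjj, inv_inv]
  constructor
  · intro h; linarith
  · intro h; linarith
end

section
/- Let Σ = [[1, a],[a, 1]] with |a| < 1 and let R_sgm = {h ∈ ℝ² : |h₁| > |h₂|, |h₁| > √u} for u > 0. Then inf_{h ∈ R_sgm} hᵀΣ⁻¹h = u, attained at (√u, a√u). -/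
open Matrix

/-- Mahalanobis distance from the origin to the signed-maximum rejection region
`R = {h : |h₁| > |h₂|, |h₁| > √u}` equals `u`, attained at the boundary point
`(√u, a√u)`. -/
theorem stmt11 (a u : ℝ) (ha : |a| < 1) (hu : 0 < u) :
    letI S : Matrix (Fin 2) (Fin 2) ℝ := !![1, a; a, 1]
    letI Q : (Fin 2 → ℝ) → ℝ := fun h => h ⬝ᵥ (S⁻¹).mulVec h
    letI R : Set (Fin 2 → ℝ) := {h | |h 0| > |h 1| ∧ |h 0| > Real.sqrt u}
    sInf (Q '' R) = u ∧ Q ![Real.sqrt u, a * Real.sqrt u] = u := by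
  have ha' := abs_lt.mp ha
  have ha2 : (0:ℝ) < 1 - a ^ 2 := by nlinarith [ha'.1, ha'.2]
  have ha2' : (1:ℝ) - a ^ 2 ≠ 0 := ne_of_gt ha2
  have hinv : (!![1, a; a, 1] : Matrix (Fin 2) (Fin 2) ℝ)⁻¹ = (1 - a ^ 2)⁻¹ • !![1, -a; -a, 1] := by
    apply Matrix.inv_eq_right_inv
    ext i j
    fin_cases i <;> fin_cases j <;>
      simp [Matrix.mul_apply, Fin.sum_univ_two] <;> field_simp <;> ring
  have hQ : ∀ h : Fin 2 → ℝ, h ⬝ᵥ (!![1, a; a, 1] : Matrix (Fin 2) (Fin 2) ℝ)⁻¹ *ᵥ h = (h 0) ^ 2 + (h 1 - a * h 0) ^ 2 / (1 - a ^ 2) := by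
    intro h
    simp only [hinv, Matrix.smul_mulVec, Matrix.mulVec, dotProduct,
      Fin.sum_univ_two, Matrix.cons_val', Matrix.cons_val_zero, Matrix.cons_val_one,
      Matrix.head_cons, Matrix.empty_val', Matrix.cons_val_fin_one, Matrix.head_fin_const,
      Pi.smul_apply, Matrix.smul_apply, Matrix.of_apply, smul_eq_mul]
    field_simp
    ring
  have hsu : Real.sqrt u ^ 2 = u := Real.sq_sqrt hu.le
  have hpoint : (![Real.sqrt u, a * Real.sqrt u] : Fin 2 → ℝ) ⬝ᵥ (!![1, a; a, 1] : Matrix (Fin 2) (Fin 2) ℝ)⁻¹ *ᵥ ![Real.sqrt u, a * Real.sqrt u] = u := by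
    rw [hQ]
    simp [hsu]
  refine ⟨?_, hpoint⟩
  -- key: Q on the region is > u; and values approach u
  have hlb : ∀ x ∈ (fun h : Fin 2 → ℝ => h ⬝ᵥ (!![1, a; a, 1] : Matrix (Fin 2) (Fin 2) ℝ)⁻¹ *ᵥ h) '' {h : Fin 2 → ℝ | |h 0| > |h 1| ∧ |h 0| > Real.sqrt u}, u ≤ x := by
    rintro x ⟨h, ⟨hh1, hh2⟩, rfl⟩
    simp only [hQ]
    have h02 : u < (h 0) ^ 2 := by
      have : Real.sqrt u ^ 2 < |h 0| ^ 2 := by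
        apply pow_lt_pow_left₀ hh2 (Real.sqrt_nonneg u)
        norm_num
      rwa [hsu, sq_abs] at this
    have : 0 ≤ (h 1 - a * h 0) ^ 2 / (1 - a ^ 2) :=
      div_nonneg (sq_nonneg _) ha2.le
    linarith
  -- elements of the region: (t, a t) for t > √u
  have hmem : ∀ t : ℝ, Real.sqrt u < t → (![t, a * t] : Fin 2 → ℝ) ∈ {h : Fin 2 → ℝ | |h 0| > |h 1| ∧ |h 0| > Real.sqrt u} := by
    intro t ht
    have ht0 : 0 < t := lt_of_le_of_lt (Real.sqrt_nonneg u) ht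
    constructor
    · show |t| > |a * t|
      rw [abs_mul, abs_of_pos ht0]
      calc |a| * t < 1 * t := by exact mul_lt_mul_of_pos_right ha ht0
        _ = t := one_mul t
    · show |t| > Real.sqrt u
      rwa [abs_of_pos ht0]
  have hQt : ∀ t : ℝ, (![t, a * t] : Fin 2 → ℝ) ⬝ᵥ (!![1, a; a, 1] : Matrix (Fin 2) (Fin 2) ℝ)⁻¹ *ᵥ ![t, a * t] = t ^ 2 := by
    intro t
    rw [hQ]
    simp
  have hne : ((fun h : Fin 2 → ℝ => h ⬝ᵥ (!![1, a; a, 1] : Matrix (Fin 2) (Fin 2) ℝ)⁻¹ *ᵥ h) '' {h : Fin 2 → ℝ | |h 0| > |h 1| ∧ |h 0| > Real.sqrt u}).Nonempty := by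
    refine ⟨_, ⟨![Real.sqrt (u + 1), a * Real.sqrt (u + 1)], hmem _ ?_, rfl⟩⟩
    exact Real.sqrt_lt_sqrt hu.le (by linarith)
  have hbdd : BddBelow _ := ⟨u, hlb⟩
  apply le_antisymm
  · -- sInf ≤ u
    rw [Real.sInf_le_iff hbdd hne]
    intro ε hε
    have hε2 : u < u + ε / 2 := by linarith
    refine ⟨_, ⟨![Real.sqrt (u + ε / 2), a * Real.sqrt (u + ε / 2)],
      hmem _ (Real.sqrt_lt_sqrt hu.le hε2), rfl⟩, ?_⟩
    simp only [hQt, Real.sq_sqrt (by linarith : (0:ℝ) ≤ u + ε / 2)]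
    linarith
  · exact le_csInf hne hlb
end

section
/- Let (Z, Z̃) ~ N₂((β, 0)ᵀ, Σ) with Σ = [[σ₁, σ₂],[σ₂, σ₁]] positive definite and β = √(2r log p), and consider the region S = {(x,y) : |x| ≤ √(2u log p) or |x| < |y|} ⊂ ℝ². Then the infimum of the Mahalanobis squared distance (v − (β,0))ᵀΣ⁻¹(v − (β,0)) over v ∈ S equals 2 log(p) · min{ (√r − √u)₊²/σ₁, r/(2(σ₁+σ₂)), r/(2(σ₁−σ₂)) } when r > u. -/
open Matrix

private lemma aux_sq (σ1 σ2 c y : ℝ) (ha : 0 < σ1 + σ2) (hb : 0 < σ1 - σ2) :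
    c^2/σ1 ≤ (c+y)^2/(2*(σ1+σ2)) + (c-y)^2/(2*(σ1-σ2)) := by
  have hσ1 : 0 < σ1 := by linarith
  rw [div_add_div _ _ (by positivity) (by positivity), div_le_div_iff₀ hσ1 (by positivity)]
  nlinarith [sq_nonneg (σ2*c - σ1*y)]

set_option maxHeartbeats 1000000 in
/-- For `Σ = [[σ₁,σ₂],[σ₂,σ₁]]` positive definite and mean `(β,0)` with
`β = √(2r log p)`, the infimum of the Mahalanobis squared distance over
`S = {(x,y) : |x| ≤ √(2u log p) or |x| < |y|}` is
`2 log p · min{(√r−√u)₊²/σ₁, r/(2(σ₁+σ₂)), r/(2(σ₁−σ₂))}` when `r > u`. -/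
theorem stmt13 (σ1 σ2 r u : ℝ) (p : ℝ) (hp : 1 < p)
    (hpd : (!![σ1, σ2; σ2, σ1] : Matrix (Fin 2) (Fin 2) ℝ).PosDef)
    (hu : 0 < u) (hur : u < r) :
    letI S : Matrix (Fin 2) (Fin 2) ℝ := !![σ1, σ2; σ2, σ1]
    letI β : ℝ := Real.sqrt (2 * r * Real.log p)
    letI t : ℝ := Real.sqrt (2 * u * Real.log p)
    letI μ : Fin 2 → ℝ := ![β, 0]
    letI Q : (Fin 2 → ℝ) → ℝ := fun v => (v - μ) ⬝ᵥ (S⁻¹).mulVec (v - μ)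
    letI A : Set (Fin 2 → ℝ) := {v | |v 0| ≤ t ∨ |v 0| < |v 1|}
    sInf (Q '' A) = 2 * Real.log p *
      min (min ((max (Real.sqrt r - Real.sqrt u) 0) ^ 2 / σ1) (r / (2 * (σ1 + σ2))))
        (r / (2 * (σ1 - σ2))) := by
  have hL : 0 < Real.log p := Real.log_pos hp
  set L := Real.log p with hLdef
  set S : Matrix (Fin 2) (Fin 2) ℝ := !![σ1, σ2; σ2, σ1] with hSdef
  set β : ℝ := Real.sqrt (2 * r * L) with hβdef
  set t : ℝ := Real.sqrt (2 * u * L) with htdef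
  set μ : Fin 2 → ℝ := ![β, 0] with hμdef
  set Q : (Fin 2 → ℝ) → ℝ := fun v => (v - μ) ⬝ᵥ (S⁻¹).mulVec (v - μ) with hQdef
  set A : Set (Fin 2 → ℝ) := {v | |v 0| ≤ t ∨ |v 0| < |v 1|} with hAdef
  clear_value A Q μ t β S
  -- positivity of eigenvalues
  have h1 := hpd.dotProduct_mulVec_pos (x := ![1,1]) (by intro h; have := congrFun h 0; simp at this)
  have h2 := hpd.dotProduct_mulVec_pos (x := ![1,-1]) (by intro h; have := congrFun h 0; simp at this)
  simp only [hSdef] at h1 h2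
  simp [Matrix.mulVec, dotProduct, Fin.sum_univ_two] at h1 h2
  have ha : 0 < σ1 + σ2 := by linarith
  have hb : 0 < σ1 - σ2 := by linarith
  have hσ1 : 0 < σ1 := by linarith
  have hd : σ1^2 - σ2^2 ≠ 0 := by nlinarith
  -- explicit inverse
  have hinv : S⁻¹ = (σ1^2 - σ2^2)⁻¹ • !![σ1, -σ2; -σ2, σ1] := by
    rw [hSdef]
    apply inv_eq_right_inv
    ext i j
    fin_cases i <;> fin_cases j <;>
      simp [Matrix.mul_apply, Fin.sum_univ_two, Matrix.one_apply] <;>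
      field_simp <;> ring
  -- diagonalized form of Q
  have hQ : ∀ v : Fin 2 → ℝ,
      Q v = (v 0 - β + v 1)^2/(2*(σ1+σ2)) + (v 0 - β - v 1)^2/(2*(σ1-σ2)) := by
    intro v
    rw [hQdef, hinv]
    simp [Matrix.mulVec, dotProduct, Fin.sum_univ_two, hμdef, Pi.sub_apply]
    have h1 : σ1 + σ2 ≠ 0 := ne_of_gt ha
    have h2 : σ1 - σ2 ≠ 0 := ne_of_gt hb
    field_simp
    ring
  -- basic facts about β and t
  have hr : 0 < r := lt_trans hu hur
  have hβ2 : β^2 = 2*r*L := by rw [hβdef]; exact Real.sq_sqrt (by nlinarith)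
  have hβ' : β = Real.sqrt (2*L) * Real.sqrt r := by
    rw [hβdef, show 2*r*L = (2*L)*r by ring, Real.sqrt_mul (by linarith)]
  have ht' : t = Real.sqrt (2*L) * Real.sqrt u := by
    rw [htdef, show 2*u*L = (2*L)*u by ring, Real.sqrt_mul (by linarith)]
  have hsru : Real.sqrt u ≤ Real.sqrt r := Real.sqrt_le_sqrt hur.le
  have hβpos : 0 < β := by rw [hβdef]; exact Real.sqrt_pos.mpr (by nlinarith)
  have htnn : 0 ≤ t := by rw [htdef]; exact Real.sqrt_nonneg _
  have htβ : t < β := by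
    rw [hβ', ht']
    have : Real.sqrt u < Real.sqrt r := by
      apply Real.sqrt_lt_sqrt hu.le hur
    have h2L : 0 < Real.sqrt (2*L) := Real.sqrt_pos.mpr (by linarith)
    nlinarith
  have e1 : 2*L*((Real.sqrt r - Real.sqrt u)^2/σ1) = (β - t)^2/σ1 := by
    rw [hβ', ht']
    have h2L : Real.sqrt (2*L)^2 = 2*L := Real.sq_sqrt (by linarith)
    rw [show (Real.sqrt (2*L) * Real.sqrt r - Real.sqrt (2*L) * Real.sqrt u)^2
        = Real.sqrt (2*L)^2 * (Real.sqrt r - Real.sqrt u)^2 by ring, h2L]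
    ring
  have e2 : 2*L*(r/(2*(σ1+σ2))) = β^2/(2*(σ1+σ2)) := by rw [hβ2]; ring
  have e3 : 2*L*(r/(2*(σ1-σ2))) = β^2/(2*(σ1-σ2)) := by rw [hβ2]; ring
  have hmax : max (Real.sqrt r - Real.sqrt u) 0 = Real.sqrt r - Real.sqrt u :=
    max_eq_left (by linarith)
  rw [hmax, mul_min_of_nonneg _ _ (by positivity : (0:ℝ) ≤ 2*L),
    mul_min_of_nonneg _ _ (by positivity : (0:ℝ) ≤ 2*L), e1, e2, e3]
  -- the candidate minimizer on the line x = t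
  set v1 : Fin 2 → ℝ := ![t, σ2*(t-β)/σ1] with hv1
  have hv1A : v1 ∈ A := by
    rw [hAdef]
    left
    simp [v1, abs_of_nonneg htnn]
  have hQv1 : Q v1 = (β - t)^2/σ1 := by
    rw [hQ]
    simp [v1]
    have h1 : σ1 + σ2 ≠ 0 := ne_of_gt ha
    have h2 : σ1 - σ2 ≠ 0 := ne_of_gt hb
    field_simp
    ring
  have hne : (Q '' A).Nonempty := ⟨Q v1, v1, hv1A, rfl⟩
  have hbdd : BddBelow (Q '' A) := by
    refine ⟨0, ?_⟩
    rintro w ⟨v, -, rfl⟩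
    rw [hQ]
    have n1 : (0:ℝ) ≤ (v 0 - β + v 1)^2/(2*(σ1+σ2)) := div_nonneg (sq_nonneg _) (by linarith)
    have n2 : (0:ℝ) ≤ (v 0 - β - v 1)^2/(2*(σ1-σ2)) := div_nonneg (sq_nonneg _) (by linarith)
    linarith
  apply le_antisymm
  · -- sInf ≤ RHS
    rw [le_min_iff, le_min_iff]
    refine ⟨⟨?_, ?_⟩, ?_⟩
    · exact hQv1 ▸ csInf_le hbdd ⟨v1, hv1A, rfl⟩
    · -- approach the tangent point on y = -x
      have key : ∀ δ ∈ Set.Ioi (0:ℝ), sInf (Q '' A) ≤ (β+δ)^2/(2*(σ1+σ2)) := by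
        intro δ hδ
        rw [Set.mem_Ioi] at hδ
        set v2 : Fin 2 → ℝ := ![(β-δ)/2, -((β+δ)/2)] with hv2
        have hv2A : v2 ∈ A := by
          simp only [hAdef, Set.mem_setOf_eq, hv2, Matrix.cons_val_zero,
            Matrix.cons_val_one, Matrix.head_cons]
          right
          rw [abs_neg, abs_of_pos (by linarith : (0:ℝ) < (β+δ)/2), abs_lt]
          constructor <;> linarith
        have : Q v2 = (β+δ)^2/(2*(σ1+σ2)) := by
          rw [hQ]; simp [v2]; ring_nf
        exact this ▸ csInf_le hbdd ⟨v2, hv2A, rfl⟩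
      have hT : Filter.Tendsto (fun δ : ℝ => (β+δ)^2/(2*(σ1+σ2)))
          (nhdsWithin 0 (Set.Ioi 0)) (nhds (β^2/(2*(σ1+σ2)))) := by
        have hc : Continuous (fun δ : ℝ => (β+δ)^2/(2*(σ1+σ2))) :=
          ((continuous_const.add continuous_id).pow 2).div_const _
        have := hc.tendsto 0
        simpa using this.mono_left nhdsWithin_le_nhds
      exact ge_of_tendsto hT (Filter.eventually_of_mem self_mem_nhdsWithin key)
    · -- approach the tangent point on y = x
      have key : ∀ δ ∈ Set.Ioi (0:ℝ), sInf (Q '' A) ≤ (β+δ)^2/(2*(σ1-σ2)) := by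
        intro δ hδ
        rw [Set.mem_Ioi] at hδ
        set v3 : Fin 2 → ℝ := ![(β-δ)/2, (β+δ)/2] with hv3
        have hv3A : v3 ∈ A := by
          simp only [hAdef, Set.mem_setOf_eq, hv3, Matrix.cons_val_zero,
            Matrix.cons_val_one, Matrix.head_cons]
          right
          rw [abs_of_pos (by linarith : (0:ℝ) < (β+δ)/2), abs_lt]
          constructor <;> linarith
        have : Q v3 = (β+δ)^2/(2*(σ1-σ2)) := by
          rw [hQ]; simp [v3]; ring_nf
        exact this ▸ csInf_le hbdd ⟨v3, hv3A, rfl⟩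
      have hT : Filter.Tendsto (fun δ : ℝ => (β+δ)^2/(2*(σ1-σ2)))
          (nhdsWithin 0 (Set.Ioi 0)) (nhds (β^2/(2*(σ1-σ2)))) := by
        have hc : Continuous (fun δ : ℝ => (β+δ)^2/(2*(σ1-σ2))) :=
          ((continuous_const.add continuous_id).pow 2).div_const _
        have := hc.tendsto 0
        simpa using this.mono_left nhdsWithin_le_nhds
      exact ge_of_tendsto hT (Filter.eventually_of_mem self_mem_nhdsWithin key)
  · -- RHS ≤ sInf : lower bound on Q over A
    apply le_csInf hne
    rintro w ⟨v, hv, rfl⟩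
    rw [hQ]
    simp only [hAdef, Set.mem_setOf_eq] at hv
    set x := v 0 with hx
    set y := v 1 with hy
    clear_value x y
    rcases hv with hv | hv
    · -- |x| ≤ t
      refine le_trans (min_le_of_left_le (min_le_left _ _)) ?_
      have hxt : x ≤ t := le_trans (le_abs_self x) hv
      have h1 : (β - t)^2 ≤ (x - β)^2 := by
        nlinarith [mul_nonneg (sub_nonneg.mpr hxt) (by linarith : (0:ℝ) ≤ 2*β - t - x)]
      calc (β-t)^2/σ1 ≤ (x-β)^2/σ1 := (div_le_div_iff_of_pos_right hσ1).mpr h1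
        _ ≤ _ := aux_sq σ1 σ2 (x-β) y ha hb
    · -- |x| < |y|
      rcases le_or_gt 0 y with hy0 | hy0
      · -- y ≥ 0, so y > x and the (x-β-y) term dominates
        have hxy : x < y := lt_of_le_of_lt (le_abs_self x) (hv.trans_le (le_of_eq (abs_of_nonneg hy0)))
        refine le_trans (min_le_right _ _) ?_
        have h1 : β^2 ≤ (x - β - y)^2 := by
          nlinarith [mul_nonneg (le_of_lt (sub_pos.mpr hxy)) (by linarith : (0:ℝ) ≤ y - x + 2*β)]
        calc β^2/(2*(σ1-σ2)) ≤ (x-β-y)^2/(2*(σ1-σ2)) :=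
              (div_le_div_iff_of_pos_right (by linarith)).mpr h1
          _ ≤ _ := le_add_of_nonneg_left (div_nonneg (sq_nonneg _) (by linarith))
      · -- y < 0, so x + y < 0 and the (x-β+y) term dominates
        have hxy : x < -y := by
          have := hv.trans_le (le_of_eq (abs_of_neg hy0))
          exact lt_of_le_of_lt (le_abs_self x) this
        refine le_trans (min_le_of_left_le (min_le_right _ _)) ?_
        have h1 : β^2 ≤ (x - β + y)^2 := by
          nlinarith [mul_nonneg (by linarith : (0:ℝ) ≤ -(x+y)) (by linarith : (0:ℝ) ≤ 2*β - (x+y))]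
        calc β^2/(2*(σ1+σ2)) ≤ (x-β+y)^2/(2*(σ1+σ2)) :=
              (div_le_div_iff_of_pos_right (by linarith)).mpr h1
          _ ≤ _ := le_add_of_nonneg_right (div_nonneg (sq_nonneg _) (by linarith))
end

section
/- Let μ ∈ ℝ^d, Σ ∈ ℝ^{d×d} symmetric positive definite, and S ⊂ ℝ^d open with μ ∉ S and b := inf_{x∈S} (x−μ)ᵀΣ⁻¹(x−μ) < ∞. Suppose X_p ~ N_d(μ, Σ/(2 log p)) for each p ≥ 2. Then for every ε > 0, p^{b−ε}·P(X_p ∈ S) → 0 and p^{b+ε}·P(X_p ∈ S) → ∞ as p → ∞; i.e., P(X_p ∈ S) = p^{−b + o(1)}. -/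
open Matrix MeasureTheory Filter
set_option maxHeartbeats 1000000

lemma continuous_quad {d : ℕ} (M : Matrix (Fin d) (Fin d) ℝ) :
    Continuous (fun x : Fin d → ℝ => x ⬝ᵥ M *ᵥ x) := by
  simp only [dotProduct, mulVec]
  exact continuous_finset_sum _ fun i _ =>
    (continuous_apply i).mul (continuous_finset_sum _ fun j _ =>
      continuous_const.mul (continuous_apply j))

lemma quad_lower_bound {d : ℕ} (M : Matrix (Fin d) (Fin d) ℝ) (hM : M.PosDef) (hd : 0 < d) :
    ∃ α > 0, ∀ x : Fin d → ℝ, α * (∑ i, x i ^ 2) ≤ x ⬝ᵥ M *ᵥ x := by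
  have hpos : ∀ x : Fin d → ℝ, x ≠ 0 → 0 < x ⬝ᵥ M *ᵥ x := by
    intro x hx
    simpa using hM.dotProduct_mulVec_pos hx
  set K : Set (Fin d → ℝ) := {x | ∑ i, x i ^ 2 = 1} with hK
  have hKc : IsClosed K := isClosed_eq (by continuity) continuous_const
  have hKb : K ⊆ Metric.closedBall 0 1 := by
    intro x hx
    rw [Metric.mem_closedBall, dist_zero_right]
    refine (pi_norm_le_iff_of_nonneg zero_le_one).2 fun i => ?_
    rw [Real.norm_eq_abs, abs_le]
    have h1 : x i ^ 2 ≤ 1 := by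
      rw [← hx]
      exact Finset.single_le_sum (f := fun i => x i ^ 2) (fun j _ => sq_nonneg _) (Finset.mem_univ i)
    constructor <;> nlinarith
  have hKcomp : IsCompact K :=
    (isCompact_closedBall (0 : Fin d → ℝ) 1).of_isClosed_subset hKc hKb
  have hKne : K.Nonempty := by
    refine ⟨Pi.single ⟨0, hd⟩ 1, ?_⟩
    simp only [hK, Set.mem_setOf_eq, Pi.single_apply]
    rw [Finset.sum_eq_single ⟨0, hd⟩]
    · simp
    · intro j _ hj; simp [hj]
    · simp
  obtain ⟨z, hzK, hz⟩ := hKcomp.exists_isMinOn hKne (continuous_quad M).continuousOn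
  have hzne : z ≠ 0 := by
    intro h
    rw [h] at hzK
    simp [hK] at hzK
  refine ⟨z ⬝ᵥ M *ᵥ z, hpos z hzne, fun x => ?_⟩
  by_cases hx : x = 0
  · simp [hx]
  have hs : 0 < ∑ i, x i ^ 2 := by
    rcases (Finset.sum_nonneg (fun i _ => sq_nonneg (x i))).lt_or_eq with h | h
    · exact h
    · exfalso
      apply hx
      funext i
      have h2 := (Finset.sum_eq_zero_iff_of_nonneg (fun i _ => sq_nonneg (x i))).1 h.symm i
        (Finset.mem_univ i)
      simpa using pow_eq_zero_iff two_ne_zero |>.1 h2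
  set c : ℝ := Real.sqrt (∑ i, x i ^ 2) with hc
  have hcpos : 0 < c := Real.sqrt_pos.2 hs
  have hc2 : c ^ 2 = ∑ i, x i ^ 2 := Real.sq_sqrt hs.le
  have hy : (c⁻¹ • x) ∈ K := by
    simp only [hK, Set.mem_setOf_eq, Pi.smul_apply, smul_eq_mul, mul_pow, ← Finset.mul_sum]
    rw [← hc2]
    field_simp
  have hq : (c⁻¹ • x) ⬝ᵥ M *ᵥ (c⁻¹ • x) = c⁻¹ * (c⁻¹ * (x ⬝ᵥ M *ᵥ x)) := by
    rw [Matrix.mulVec_smul, smul_dotProduct, dotProduct_smul]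
    simp [smul_eq_mul]
  have h3 : z ⬝ᵥ M *ᵥ z ≤ (c⁻¹ • x) ⬝ᵥ M *ᵥ (c⁻¹ • x) := hz hy
  rw [hq] at h3
  have h2 : (z ⬝ᵥ M *ᵥ z) * c ^ 2 ≤ x ⬝ᵥ M *ᵥ x := by
    rw [sq]
    calc (z ⬝ᵥ M *ᵥ z) * (c * c) ≤ (c⁻¹ * (c⁻¹ * (x ⬝ᵥ M *ᵥ x))) * (c * c) := by
          apply mul_le_mul_of_nonneg_right h3 (by positivity)
      _ = x ⬝ᵥ M *ᵥ x := by field_simp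
  rw [← hc2]; linarith

lemma integrable_exp_neg_quad {d : ℕ} (hd : 0 < d) (μ : Fin d → ℝ)
    (M : Matrix (Fin d) (Fin d) ℝ) (hM : M.PosDef) :
    Integrable (fun x : Fin d → ℝ => Real.exp (-((x - μ) ⬝ᵥ M *ᵥ (x - μ)))) := by
  obtain ⟨α, hα, hquad⟩ := quad_lower_bound M hM hd
  have h1 : Integrable (fun x : Fin d → ℝ => ∏ i, Real.exp (-α * (x i) ^ 2)) :=
    Integrable.fintype_prod fun _ => integrable_exp_neg_mul_sq hα
  have h2 : Integrable (fun x : Fin d → ℝ => Real.exp (-(x ⬝ᵥ M *ᵥ x))) := by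
    refine h1.mono
      ((Real.continuous_exp.comp ((continuous_quad M).neg)).aestronglyMeasurable) ?_
    filter_upwards with x
    have hprod : ∏ i, Real.exp (-α * (x i) ^ 2) = Real.exp (-α * ∑ i, (x i) ^ 2) := by
      rw [Finset.mul_sum, Real.exp_sum]
    rw [hprod, Real.norm_eq_abs, Real.norm_eq_abs, abs_of_pos (Real.exp_pos _),
      abs_of_pos (Real.exp_pos _), Real.exp_le_exp]
    have := hquad x
    linarith
  exact h2.comp_sub_right μ

/-- Fixed-parameter large deviation asymptotics for a Gaussian vector
`X_p ~ N_d(μ, Σ/(2 log p))` (represented by its Lebesgue density): for an open set `S`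
with `μ ∉ S` and `b = inf_{x ∈ S} (x−μ)ᵀΣ⁻¹(x−μ)`, one has
`p^{b−ε}·P(X_p ∈ S) → 0` and `p^{b+ε}·P(X_p ∈ S) → ∞` for every `ε > 0`. -/
theorem stmt14 {d : ℕ} (μ : Fin d → ℝ) (S : Matrix (Fin d) (Fin d) ℝ)
    (hpd : S.PosDef) (hsym : S.IsSymm)
    (A : Set (Fin d → ℝ)) (hA : IsOpen A) (hμ : μ ∉ A) (hne : A.Nonempty)
    (b : ℝ) (hb : b = sInf ((fun x => (x - μ) ⬝ᵥ (S⁻¹).mulVec (x - μ)) '' A))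
    (ε : ℝ) (hε : 0 < ε) :
    letI f : ℕ → (Fin d → ℝ) → ℝ := fun p x =>
      (Real.sqrt ((2 * Real.pi) ^ d * ((2 * Real.log p)⁻¹ • S).det))⁻¹ *
        Real.exp (-(Real.log p) * ((x - μ) ⬝ᵥ (S⁻¹).mulVec (x - μ)))
    Tendsto (fun p : ℕ => (p : ℝ) ^ (b - ε) * ∫ x in A, f p x) atTop (nhds 0) ∧
    Tendsto (fun p : ℕ => (p : ℝ) ^ (b + ε) * ∫ x in A, f p x) atTop atTop := by
  set f : ℕ → (Fin d → ℝ) → ℝ := fun p x =>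
      (Real.sqrt ((2 * Real.pi) ^ d * ((2 * Real.log p)⁻¹ • S).det))⁻¹ *
        Real.exp (-(Real.log p) * ((x - μ) ⬝ᵥ (S⁻¹).mulVec (x - μ))) with hfdef
  -- dimension is positive
  rcases Nat.eq_zero_or_pos d with hd0 | hd
  · exfalso
    apply hμ
    obtain ⟨y, hy⟩ := hne
    have hμy : μ = y := by subst hd0; funext i; exact absurd i.2 (Nat.not_lt_zero _)
    rwa [hμy]
  set q : (Fin d → ℝ) → ℝ := fun x => (x - μ) ⬝ᵥ (S⁻¹).mulVec (x - μ) with hqdef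
  have hMpd : (S⁻¹).PosDef := hpd.inv
  have hqcont : Continuous q := (continuous_quad (S⁻¹)).comp (continuous_sub_right μ)
  have hq0 : ∀ x, 0 ≤ q x := fun x => by simpa only [star_trivial] using hMpd.posSemidef.dotProduct_mulVec_nonneg (x - μ)
  have hbdd : BddBelow (q '' A) := ⟨0, by rintro y ⟨x, -, rfl⟩; exact hq0 x⟩
  have hb0 : 0 ≤ b := by
    rw [hb]
    exact le_csInf (hne.image q) (by rintro y ⟨x, -, rfl⟩; exact hq0 x)
  have hbA : ∀ x ∈ A, b ≤ q x := fun x hx => hb ▸ csInf_le hbdd ⟨x, hx, rfl⟩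
  -- the reference Gaussian integral
  have hI : Integrable (fun x : Fin d → ℝ => Real.exp (-q x)) :=
    integrable_exp_neg_quad hd μ (S⁻¹) hMpd
  set I : ℝ := ∫ x : Fin d → ℝ, Real.exp (-q x) with hIdef
  have hI0 : 0 ≤ I := integral_nonneg fun x => (Real.exp_pos _).le
  have hdetpos : (0:ℝ) < (2 * Real.pi) ^ d * S.det :=
    mul_pos (pow_pos (by positivity) d) hpd.det_pos
  set c0 : ℝ := (Real.sqrt ((2 * Real.pi) ^ d * S.det))⁻¹ with hc0def
  have hc0 : 0 < c0 := inv_pos.2 (Real.sqrt_pos.2 hdetpos)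
  -- normalization constant identity
  have hN : ∀ p : ℕ, 0 < Real.log p →
      (Real.sqrt ((2 * Real.pi) ^ d * ((2 * Real.log p)⁻¹ • S).det))⁻¹
        = Real.sqrt ((2 * Real.log p) ^ d) * c0 := by
    intro p hp
    rw [Matrix.det_smul, Fintype.card_fin]
    have heq : (2 * Real.pi) ^ d * (((2 * Real.log p)⁻¹) ^ d * S.det)
        = ((2 * Real.pi) ^ d * S.det) * ((2 * Real.log p) ^ d)⁻¹ := by
      rw [← inv_pow]; ring
    rw [heq, Real.sqrt_mul hdetpos.le, Real.sqrt_inv, mul_inv, inv_inv, hc0def]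
    ring
  have hNnn : ∀ p : ℕ,
      0 ≤ (Real.sqrt ((2 * Real.pi) ^ d * ((2 * Real.log p)⁻¹ • S).det))⁻¹ :=
    fun p => by positivity
  -- pointwise form of f
  have hf : ∀ (p : ℕ) (x : Fin d → ℝ), f p x =
      (Real.sqrt ((2 * Real.pi) ^ d * ((2 * Real.log p)⁻¹ • S).det))⁻¹ *
        Real.exp (-(Real.log p) * q x) := fun _ _ => rfl
  have hfpos : ∀ (p : ℕ) (x : Fin d → ℝ), 0 ≤ f p x := by
    intro p x
    rw [hf]
    exact mul_nonneg (hNnn p) (Real.exp_pos _).le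
  -- integrability of f p for log p ≥ 1
  have hfint : ∀ p : ℕ, 1 ≤ Real.log p → Integrable (f p) := by
    intro p hp
    have h1 : Integrable (fun x : Fin d → ℝ => Real.exp (-(Real.log p) * q x)) := by
      refine hI.mono
        ((Real.continuous_exp.comp (continuous_const.mul hqcont)).aestronglyMeasurable) ?_
      · filter_upwards with x
        rw [Real.norm_eq_abs, Real.norm_eq_abs, abs_of_pos (Real.exp_pos _),
          abs_of_pos (Real.exp_pos _), Real.exp_le_exp]
        nlinarith [hq0 x]
    exact h1.const_mul _
  have hL1 : ∀ p : ℕ, 3 ≤ p → 1 ≤ Real.log p := by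
    intro p hp
    have hppos : (0:ℝ) < p := by
      have : (0:ℕ) < p := by omega
      exact_mod_cast this
    rw [Real.le_log_iff_exp_le hppos]
    have h3 : Real.exp 1 ≤ 3 := (lt_trans Real.exp_one_lt_d9 (by norm_num)).le
    have h4 : (3:ℝ) ≤ p := by exact_mod_cast hp
    linarith
  have hLpos : ∀ p : ℕ, 3 ≤ p → 0 < Real.log p := fun p hp => lt_of_lt_of_le one_pos (hL1 p hp)
  have hppos' : ∀ p : ℕ, 3 ≤ p → (0:ℝ) < p := by
    intro p hp
    have : (0:ℕ) < p := by omega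
    exact_mod_cast this
  have hsqrt : ∀ y : ℝ, 0 ≤ y → Real.sqrt y ≤ y + 1 := by
    intro y hy
    nlinarith [Real.sq_sqrt hy, Real.sqrt_nonneg y]
  constructor
  · -- upper bound tends to zero
    set D : ℝ := c0 * Real.exp b * I with hDdef
    have hD0 : 0 ≤ D := by positivity
    apply squeeze_zero'
      (g := fun p : ℕ => D * (((2 * Real.log p) ^ d + 1) * Real.exp (-ε * Real.log p)))
    · filter_upwards [eventually_ge_atTop 3] with p hp
      exact mul_nonneg (Real.rpow_nonneg (Nat.cast_nonneg p) _)
        (setIntegral_nonneg hA.measurableSet fun x _ => hfpos p x)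
    · filter_upwards [eventually_ge_atTop 3] with p hp
      have hL := hL1 p hp
      have hLp := hLpos p hp
      have hpp := hppos' p hp
      have hNp := hN p hLp
      have key : ∫ x in A, f p x ≤
          ((Real.sqrt ((2 * Real.pi) ^ d * ((2 * Real.log p)⁻¹ • S).det))⁻¹ *
            Real.exp (b - Real.log p * b)) * I := by
        have step1 : ∫ x in A, f p x ≤ ∫ x in A,
            ((Real.sqrt ((2 * Real.pi) ^ d * ((2 * Real.log p)⁻¹ • S).det))⁻¹ *
              Real.exp (b - Real.log p * b)) * Real.exp (-q x) := by
          refine setIntegral_mono_on ((hfint p hL).integrableOn)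
            ((hI.const_mul _).integrableOn) hA.measurableSet ?_
          intro x hx
          rw [hf, mul_assoc]
          refine mul_le_mul_of_nonneg_left ?_ (hNnn p)
          rw [← Real.exp_add, Real.exp_le_exp]
          nlinarith [hbA x hx]
        have step2 : ∫ x in A,
            ((Real.sqrt ((2 * Real.pi) ^ d * ((2 * Real.log p)⁻¹ • S).det))⁻¹ *
              Real.exp (b - Real.log p * b)) * Real.exp (-q x)
            = ((Real.sqrt ((2 * Real.pi) ^ d * ((2 * Real.log p)⁻¹ • S).det))⁻¹ *
              Real.exp (b - Real.log p * b)) * ∫ x in A, Real.exp (-q x) :=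
          integral_const_mul _ _
        have step3 : ∫ x in A, Real.exp (-q x) ≤ I :=
          setIntegral_le_integral hI (Eventually.of_forall fun x => (Real.exp_pos _).le)
        calc ∫ x in A, f p x ≤ _ := step1
          _ = _ := step2
          _ ≤ _ := by
            refine mul_le_mul_of_nonneg_left step3 ?_
            positivity
      have hrpow : (p:ℝ) ^ (b - ε) = Real.exp (Real.log p * (b - ε)) :=
        Real.rpow_def_of_pos hpp _
      calc (p:ℝ) ^ (b - ε) * ∫ x in A, f p x
          ≤ (p:ℝ) ^ (b - ε) * (((Real.sqrt ((2 * Real.pi) ^ d *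
              ((2 * Real.log p)⁻¹ • S).det))⁻¹ * Real.exp (b - Real.log p * b)) * I) := by
            refine mul_le_mul_of_nonneg_left key ?_
            positivity
        _ = (Real.sqrt ((2 * Real.log p) ^ d) * (c0 * I)) *
              (Real.exp (Real.log p * (b - ε)) * Real.exp (b - Real.log p * b)) := by
            rw [hrpow, hNp]; ring
        _ = (Real.sqrt ((2 * Real.log p) ^ d) * (c0 * I)) *
              (Real.exp b * Real.exp (-ε * Real.log p)) := by
            rw [← Real.exp_add, ← Real.exp_add]
            congr 1
            ring
        _ ≤ (((2 * Real.log p) ^ d + 1) * (c0 * I)) *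
              (Real.exp b * Real.exp (-ε * Real.log p)) := by
            have h := hsqrt ((2 * Real.log p) ^ d) (by positivity)
            have hrest : 0 ≤ (c0 * I) * (Real.exp b * Real.exp (-ε * Real.log p)) := by
              positivity
            nlinarith [h, hrest, mul_nonneg (mul_nonneg hc0.le hI0)
              (mul_nonneg (Real.exp_pos b).le (Real.exp_pos (-ε * Real.log p)).le)]
        _ = D * (((2 * Real.log p) ^ d + 1) * Real.exp (-ε * Real.log p)) := by
            rw [hDdef]; ring
    · -- the bounding sequence tends to zero
      have t1 : Tendsto (fun t : ℝ => t ^ d * Real.exp (-ε * t)) atTop (nhds 0) :=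
        (tendsto_rpow_mul_exp_neg_mul_atTop_nhds_zero d ε hε).congr fun t => by
          rw [Real.rpow_natCast]
      have t2 : Tendsto (fun t : ℝ => Real.exp (-ε * t)) atTop (nhds 0) := by
        refine Real.tendsto_exp_atBot.comp ?_
        exact Tendsto.const_mul_atTop_of_neg (neg_lt_zero.2 hε) tendsto_id
      have t3 : Tendsto (fun t : ℝ =>
          D * ((2:ℝ) ^ d * (t ^ d * Real.exp (-ε * t)) + Real.exp (-ε * t)))
          atTop (nhds 0) := by
        have := ((t1.const_mul ((2:ℝ) ^ d)).add t2).const_mul D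
        simpa using this
      have t5 : Tendsto (fun t : ℝ => D * (((2 * t) ^ d + 1) * Real.exp (-ε * t)))
          atTop (nhds 0) := t3.congr fun t => by ring
      exact t5.comp (Real.tendsto_log_atTop.comp tendsto_natCast_atTop_atTop)
  · -- lower bound tends to infinity
    have hlt : sInf (q '' A) < b + ε / 2 := by rw [← hb]; linarith
    obtain ⟨x0, hx0A, hx0⟩ : ∃ x ∈ A, q x < b + ε / 2 := by
      obtain ⟨y, hy, h⟩ := exists_lt_of_csInf_lt (hne.image q) hlt
      obtain ⟨x, hxA, rfl⟩ := hy
      exact ⟨x, hxA, h⟩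
    have hU : IsOpen (A ∩ q ⁻¹' Set.Iio (b + ε / 2)) :=
      hA.inter (isOpen_Iio.preimage hqcont)
    obtain ⟨r, hr, hball⟩ := Metric.isOpen_iff.1 hU x0 ⟨hx0A, hx0⟩
    set V : ℝ := (volume (Metric.ball x0 r)).toReal with hVdef
    have hV : 0 < V :=
      ENNReal.toReal_pos (Metric.measure_ball_pos volume x0 hr).ne' measure_ball_lt_top.ne
    have hmono : Tendsto (fun p : ℕ => (V * c0) * Real.exp (ε / 2 * Real.log p)) atTop atTop := by
      refine Tendsto.const_mul_atTop (by positivity) ?_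
      refine Real.tendsto_exp_atTop.comp ?_
      exact Tendsto.const_mul_atTop (by linarith) (Real.tendsto_log_atTop.comp
        tendsto_natCast_atTop_atTop)
    refine tendsto_atTop_mono' atTop ?_ hmono
    filter_upwards [eventually_ge_atTop 3] with p hp
    have hL := hL1 p hp
    have hLp := hLpos p hp
    have hpp := hppos' p hp
    have hNp := hN p hLp
    -- lower bound for the integral
    have key : ((Real.sqrt ((2 * Real.pi) ^ d * ((2 * Real.log p)⁻¹ • S).det))⁻¹ *
        Real.exp (-(Real.log p) * (b + ε / 2))) * V ≤ ∫ x in A, f p x := by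
      have step1 : ((Real.sqrt ((2 * Real.pi) ^ d * ((2 * Real.log p)⁻¹ • S).det))⁻¹ *
          Real.exp (-(Real.log p) * (b + ε / 2))) * V ≤ ∫ x in Metric.ball x0 r, f p x := by
        rw [hVdef]
        refine setIntegral_ge_of_const_le_real measurableSet_ball measure_ball_lt_top.ne
          (fun x hx => ?_) ((hfint p hL).integrableOn)
        rw [hf]
        refine mul_le_mul_of_nonneg_left ?_ (hNnn p)
        rw [Real.exp_le_exp]
        have hqx : q x < b + ε / 2 := (hball hx).2
        nlinarith [hqx, hLp]
      have step2 : ∫ x in Metric.ball x0 r, f p x ≤ ∫ x in A, f p x := by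
        refine setIntegral_mono_set ((hfint p hL).integrableOn)
          (Eventually.of_forall fun x => hfpos p x) ?_
        exact HasSubset.Subset.eventuallyLE (fun x hx => (hball hx).1)
      linarith
    have hrpow : (p:ℝ) ^ (b + ε) = Real.exp (Real.log p * (b + ε)) :=
      Real.rpow_def_of_pos hpp _
    have hsqge : (1:ℝ) ≤ Real.sqrt ((2 * Real.log p) ^ d) := by
      rw [show (1:ℝ) = Real.sqrt 1 from (Real.sqrt_one).symm]
      refine Real.sqrt_le_sqrt ?_
      calc (1:ℝ) = 1 ^ d := (one_pow d).symm
        _ ≤ (2 * Real.log p) ^ d := by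
            refine pow_le_pow_left₀ (by norm_num) (by linarith) d
    calc (V * c0) * Real.exp (ε / 2 * Real.log p)
        = (1 * c0) * (Real.exp (Real.log p * (b + ε)) *
            Real.exp (-(Real.log p) * (b + ε / 2))) * V := by
          rw [← Real.exp_add, show Real.log p * (b + ε) + -(Real.log p) * (b + ε / 2)
            = ε / 2 * Real.log p by ring]
          ring
      _ ≤ (Real.sqrt ((2 * Real.log p) ^ d) * c0) * (Real.exp (Real.log p * (b + ε)) *
            Real.exp (-(Real.log p) * (b + ε / 2))) * V := by
          have h0 : (0:ℝ) ≤ c0 * (Real.exp (Real.log p * (b + ε)) *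
              Real.exp (-(Real.log p) * (b + ε / 2))) * V := by positivity
          nlinarith [hsqge, h0]
      _ = Real.exp (Real.log p * (b + ε)) *
            (((Real.sqrt ((2 * Real.pi) ^ d * ((2 * Real.log p)⁻¹ • S).det))⁻¹ *
              Real.exp (-(Real.log p) * (b + ε / 2))) * V) := by
          rw [hNp]; ring
      _ ≤ Real.exp (Real.log p * (b + ε)) * ∫ x in A, f p x := by
          exact mul_le_mul_of_nonneg_left key (Real.exp_pos _).le
      _ = (p:ℝ) ^ (b + ε) * ∫ x in A, f p x := by rw [hrpow]
end

section
/- Let h ∈ ℝ² and Σ = [[1, ρ],[ρ, 1]] with 0 ≤ ρ < 1, and let M(h) denote the value of λ at which the first coordinate enters the solution path of the bivariate Lasso argmin_b { −hᵀb + bᵀΣb/2 + λ‖b‖₁ }. Then for h in the region A₅ = {h : h₂ > 0, ρh₂ < h₁ < h₂}, M(h) = (h₁ − ρh₂)/(1 − ρ), and for h in A₆ = {h : h₂ > 0, −h₂ < h₁ < ρh₂}, M(h) = |h₁ − ρh₂|/(1 + ρ). -/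
open Matrix

lemma lasso_key (ρ h0 h1 lam x y s0 s1 u v : ℝ) (hρ0 : 0 ≤ ρ) (hρ1 : ρ < 1) (hlam : 0 < lam)
    (hs0 : |s0| ≤ 1) (hs1 : |s1| ≤ 1) (hx : s0 * x = |x|) (hy : s1 * y = |y|)
    (e0 : x + ρ*y - h0 + lam*s0 = 0) (e1 : ρ*x + y - h1 + lam*s1 = 0)
    (hle : -(h0*u + h1*v) + (u*(u+ρ*v)+v*(ρ*u+v))/2 + lam*(|u|+|v|)
         ≤ -(h0*x + h1*y) + (x*(x+ρ*y)+y*(ρ*x+y))/2 + lam*(|x|+|y|)) :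
    u = x ∧ v = y := by
  have a1 : s0 * u ≤ |u| := by
    calc s0 * u ≤ |s0 * u| := le_abs_self _
    _ = |s0| * |u| := abs_mul _ _
    _ ≤ 1 * |u| := by gcongr
    _ = |u| := one_mul _
  have a2 : s1 * v ≤ |v| := by
    calc s1 * v ≤ |s1 * v| := le_abs_self _
    _ = |s1| * |v| := abs_mul _ _
    _ ≤ 1 * |v| := by gcongr
    _ = |v| := one_mul _
  have H0 : h0 = x + ρ*y + lam*s0 := by linarith
  have H1 : h1 = ρ*x + y + lam*s1 := by linarith
  subst H0 H1
  have hmain : (u-x)^2 + 2*ρ*(u-x)*(v-y) + (v-y)^2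
      + 2*lam*(|u| - s0*u) + 2*lam*(|v| - s1*v) ≤ 0 := by nlinarith [hle, hx, hy]
  have hk : (u-x)^2 + (v-y)^2 ≤ 0 := by
    nlinarith [mul_nonneg hρ0 (sq_nonneg (u-x+(v-y))),
      mul_nonneg hlam.le (sub_nonneg.2 a1), mul_nonneg hlam.le (sub_nonneg.2 a2)]
  constructor <;> nlinarith [sq_nonneg (u-x), sq_nonneg (v-y)]

lemma lasso_zero (ρ h0 h1 lam u v : ℝ) (hρ0 : 0 ≤ ρ) (hρ1 : ρ < 1) (hl : 0 < lam)
    (h1pos : 0 < h1)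
    (hb1 : lam < h1 → |h0 - ρ*(h1-lam)| ≤ lam)
    (hb2 : h1 ≤ lam → |h0| ≤ lam)
    (hm : ∀ x y : ℝ, -(h0*u + h1*v) + (u*(u+ρ*v)+v*(ρ*u+v))/2 + lam*(|u|+|v|)
       ≤ -(h0*x + h1*y) + (x*(x+ρ*y)+y*(ρ*x+y))/2 + lam*(|x|+|y|)) : u = 0 := by
  rcases lt_or_ge lam h1 with hc | hc
  · exact (lasso_key ρ h0 h1 lam 0 (h1-lam) ((h0-ρ*(h1-lam))/lam) 1 u v hρ0 hρ1 hl
      (by rw [abs_div, abs_of_pos hl, div_le_one hl]; exact hb1 hc)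
      (by simp) (by simp) (by rw [one_mul, abs_of_pos (by linarith)])
      (by field_simp; ring) (by ring) (hm 0 (h1-lam))).1
  · exact (lasso_key ρ h0 h1 lam 0 0 (h0/lam) (h1/lam) u v hρ0 hρ1 hl
      (by rw [abs_div, abs_of_pos hl, div_le_one hl]; exact hb2 hc)
      (by rw [abs_div, abs_of_pos hl, div_le_one hl, abs_of_pos h1pos]; exact hc)
      (by simp) (by simp) (by field_simp; ring) (by field_simp; ring) (hm 0 0)).1

lemma lasso_A5_small (ρ h0 h1 lam u v : ℝ) (hρ0 : 0 ≤ ρ) (hρ1 : ρ < 1) (hl : 0 < lam)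
    (hhi : h0 < h1) (hlt : lam*(1-ρ) < h0 - ρ*h1)
    (hm : ∀ x y : ℝ, -(h0*u + h1*v) + (u*(u+ρ*v)+v*(ρ*u+v))/2 + lam*(|u|+|v|)
       ≤ -(h0*x + h1*y) + (x*(x+ρ*y)+y*(ρ*x+y))/2 + lam*(|x|+|y|)) : u ≠ 0 := by
  have hden : (0:ℝ) < 1 - ρ^2 := by nlinarith
  have hdne : (1:ℝ) - ρ^2 ≠ 0 := ne_of_gt hden
  set x := (h0 - ρ*h1 - lam*(1-ρ))/(1-ρ^2) with hxdef
  set y := (h1 - ρ*h0 - lam*(1-ρ))/(1-ρ^2) with hydef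
  have hxpos : 0 < x := div_pos (by linarith) hden
  have hypos : 0 < y := by
    apply div_pos _ hden
    nlinarith [mul_nonneg hρ0 (by linarith : (0:ℝ) ≤ h1 - h0)]
  have := (lasso_key ρ h0 h1 lam x y 1 1 u v hρ0 hρ1 hl
    (by simp) (by simp)
    (by rw [one_mul, abs_of_pos hxpos]) (by rw [one_mul, abs_of_pos hypos])
    (by rw [hxdef, hydef]; field_simp; ring) (by rw [hxdef, hydef]; field_simp; ring)
    (hm x y)).1
  rw [this]
  exact ne_of_gt hxpos

lemma lasso_A6_small (ρ h0 h1 lam u v : ℝ) (hρ0 : 0 ≤ ρ) (hρ1 : ρ < 1) (hl : 0 < lam)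
    (hlo : -h1 < h0) (hlt : lam*(1+ρ) < ρ*h1 - h0)
    (hm : ∀ x y : ℝ, -(h0*u + h1*v) + (u*(u+ρ*v)+v*(ρ*u+v))/2 + lam*(|u|+|v|)
       ≤ -(h0*x + h1*y) + (x*(x+ρ*y)+y*(ρ*x+y))/2 + lam*(|x|+|y|)) : u ≠ 0 := by
  have hden : (0:ℝ) < 1 - ρ^2 := by nlinarith
  have hdne : (1:ℝ) - ρ^2 ≠ 0 := ne_of_gt hden
  set x := (h0 - ρ*h1 + lam*(1+ρ))/(1-ρ^2) with hxdef
  set y := (h1 - ρ*h0 - lam*(1+ρ))/(1-ρ^2) with hydef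
  have hxneg : x < 0 := div_neg_of_neg_of_pos (by linarith) hden
  have hypos : 0 < y := by
    apply div_pos _ hden
    nlinarith [mul_nonneg (by linarith : (0:ℝ) ≤ 1 - ρ) (by linarith : (0:ℝ) ≤ h1 + h0)]
  have := (lasso_key ρ h0 h1 lam x y (-1) 1 u v hρ0 hρ1 hl
    (by simp) (by simp)
    (by rw [abs_of_neg hxneg]; ring) (by rw [one_mul, abs_of_pos hypos])
    (by rw [hxdef, hydef]; field_simp; ring) (by rw [hxdef, hydef]; field_simp; ring)
    (hm x y)).1
  rw [this]
  exact ne_of_lt hxneg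

/-- For the bivariate Lasso with Gram matrix `[[1,ρ],[ρ,1]]`, `0 ≤ ρ < 1`, the value
`M(h)` at which variable 1 enters the solution path satisfies: in region
`A₅ = {h : h₂ > 0, ρh₂ < h₁ < h₂}`, `M(h) = (h₁ − ρh₂)/(1 − ρ)`; in region
`A₆ = {h : h₂ > 0, −h₂ < h₁ < ρh₂}`, `M(h) = |h₁ − ρh₂|/(1 + ρ)`. -/
theorem stmt18 (ρ : ℝ) (hρ0 : 0 ≤ ρ) (hρ1 : ρ < 1) (h : Fin 2 → ℝ)
    (bhat : ℝ → Fin 2 → ℝ)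
    (hmin : ∀ lam : ℝ, 0 < lam → ∀ b : Fin 2 → ℝ,
      -(h ⬝ᵥ bhat lam) +
          (bhat lam) ⬝ᵥ ((!![1, ρ; ρ, 1] : Matrix (Fin 2) (Fin 2) ℝ).mulVec (bhat lam)) / 2
          + lam * (|bhat lam 0| + |bhat lam 1|)
        ≤ -(h ⬝ᵥ b) + b ⬝ᵥ ((!![1, ρ; ρ, 1] : Matrix (Fin 2) (Fin 2) ℝ).mulVec b) / 2
          + lam * (|b 0| + |b 1|)) :
    (0 < h 1 ∧ ρ * h 1 < h 0 ∧ h 0 < h 1 →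
      sSup {lam | 0 < lam ∧ bhat lam 0 ≠ 0} = (h 0 - ρ * h 1) / (1 - ρ)) ∧
    (0 < h 1 ∧ -(h 1) < h 0 ∧ h 0 < ρ * h 1 →
      sSup {lam | 0 < lam ∧ bhat lam 0 ≠ 0} = |h 0 - ρ * h 1| / (1 + ρ)) := by
  have reduce : ∀ b : Fin 2 → ℝ,
      -(h ⬝ᵥ b) + b ⬝ᵥ ((!![1, ρ; ρ, 1] : Matrix (Fin 2) (Fin 2) ℝ).mulVec b) / 2
      = -(h 0 * b 0 + h 1 * b 1) + (b 0 * (b 0 + ρ * b 1) + b 1 * (ρ * b 0 + b 1)) / 2 := by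
    intro b
    simp [dotProduct, Matrix.mulVec, Fin.sum_univ_two]
  have hm : ∀ lam : ℝ, 0 < lam → ∀ x y : ℝ,
      -(h 0 * bhat lam 0 + h 1 * bhat lam 1)
        + (bhat lam 0 * (bhat lam 0 + ρ * bhat lam 1)
            + bhat lam 1 * (ρ * bhat lam 0 + bhat lam 1)) / 2
        + lam * (|bhat lam 0| + |bhat lam 1|)
      ≤ -(h 0 * x + h 1 * y) + (x*(x+ρ*y)+y*(ρ*x+y))/2 + lam*(|x|+|y|) := by
    intro lam hl x y
    have := hmin lam hl ![x, y]
    rw [reduce, reduce] at this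
    simpa using this
  have hρ1' : (0:ℝ) < 1 - ρ := by linarith
  have hρ2' : (0:ℝ) < 1 + ρ := by linarith
  constructor
  · rintro ⟨h1pos, hlo, hhi⟩
    have hLpos : 0 < (h 0 - ρ * h 1) / (1 - ρ) := div_pos (by linarith) hρ1'
    have hS : {lam | 0 < lam ∧ bhat lam 0 ≠ 0}
        = Set.Ioo 0 ((h 0 - ρ * h 1) / (1 - ρ)) := by
      ext lam
      simp only [Set.mem_setOf_eq, Set.mem_Ioo]
      constructor
      · rintro ⟨hl, hne⟩
        refine ⟨hl, ?_⟩
        by_contra hcon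
        push_neg at hcon
        have hge : h 0 - ρ * h 1 ≤ lam * (1 - ρ) := by
          have := (div_le_iff₀ hρ1').1 hcon
          linarith
        refine hne (lasso_zero ρ (h 0) (h 1) lam (bhat lam 0) (bhat lam 1) hρ0 hρ1 hl h1pos
          ?_ ?_ (hm lam hl))
        · intro hc
          rw [abs_le]
          constructor <;> nlinarith [mul_nonneg hρ0 hl.le]
        · intro hc
          rw [abs_le]
          constructor <;> nlinarith [mul_nonneg hρ0 h1pos.le]
      · rintro ⟨hl, hlt⟩
        refine ⟨hl, lasso_A5_small ρ (h 0) (h 1) lam (bhat lam 0) (bhat lam 1)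
          hρ0 hρ1 hl hhi ?_ (hm lam hl)⟩
        have := (lt_div_iff₀ hρ1').1 hlt
        linarith
    rw [hS, csSup_Ioo hLpos]
  · rintro ⟨h1pos, hlo, hhi⟩
    have habs : |h 0 - ρ * h 1| = ρ * h 1 - h 0 := by
      rw [abs_of_neg (by linarith)]; ring
    rw [habs]
    have hLpos : 0 < (ρ * h 1 - h 0) / (1 + ρ) := div_pos (by linarith) hρ2'
    have hS : {lam | 0 < lam ∧ bhat lam 0 ≠ 0}
        = Set.Ioo 0 ((ρ * h 1 - h 0) / (1 + ρ)) := by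
      ext lam
      simp only [Set.mem_setOf_eq, Set.mem_Ioo]
      constructor
      · rintro ⟨hl, hne⟩
        refine ⟨hl, ?_⟩
        by_contra hcon
        push_neg at hcon
        have hge : ρ * h 1 - h 0 ≤ lam * (1 + ρ) := by
          have := (div_le_iff₀ hρ2').1 hcon
          linarith
        refine hne (lasso_zero ρ (h 0) (h 1) lam (bhat lam 0) (bhat lam 1) hρ0 hρ1 hl h1pos
          ?_ ?_ (hm lam hl))
        · intro hc
          rw [abs_le]
          constructor <;> nlinarith [mul_nonneg hρ0 hl.le]
        · intro hc
          rw [abs_le]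
          constructor <;> nlinarith [mul_nonneg hρ0 h1pos.le]
      · rintro ⟨hl, hlt⟩
        refine ⟨hl, lasso_A6_small ρ (h 0) (h 1) lam (bhat lam 0) (bhat lam 1)
          hρ0 hρ1 hl hlo ?_ (hm lam hl)⟩
        have := (lt_div_iff₀ hρ2').1 hlt
        linarith
    rw [hS, csSup_Ioo hLpos]
end
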